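/- arXiv:1910.04295 — 7 statements merged into one kernel-verified Lean document; each statement's English description precedes it below -/
import Mathlib

section
/- If γ‖A-BK‖² < 1, then the discounted state covariance satisfies Σ^y_K = T^y_K(Σ_{y_0} + (γ/(1-γ)) Σ¹), where T^y_K(X) = Σ_{t≥0} γᵗ (A-BK)ᵗ X ((A-BK)ᵀ)ᵗ, Σ_{y_0} = E[y_0 y_0ᵀ], and Σ¹ = E[ε¹_1 (ε¹_1)ᵀ]. -/
open scoped Matrix.Norms.L2Operator
open Matrix

/-- If `γ‖A-BK‖² < 1`, the discounted state covariance
`Σ^y_K = E ∑ γ^t y_t y_tᵀ` (expressed via the closed-loop covariance recursion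
`Cov(y_t) = M^t Σ₀ (Mᵀ)^t + ∑_{s<t} M^s Σ¹ (Mᵀ)^s` with `M = A-BK`) equals
`T^y_K(Σ₀ + (γ/(1-γ)) Σ¹)` where `T^y_K(X) = ∑ γ^t M^t X (Mᵀ)^t`. -/
theorem stmt_3 {d l : ℕ} (γ : ℝ) (hγ : γ ∈ Set.Ioo (0:ℝ) 1)
    (A : Matrix (Fin d) (Fin d) ℝ) (B : Matrix (Fin d) (Fin l) ℝ)
    (K : Matrix (Fin l) (Fin d) ℝ)
    (hadm : γ * ‖A - B * K‖ ^ 2 < 1)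
    (S0 S1 : Matrix (Fin d) (Fin d) ℝ)
    (hS0 : S0.PosSemidef) (hS1 : S1.PosSemidef) :
    (∑' t : ℕ, γ ^ t •
        ((A - B * K) ^ t * S0 * ((A - B * K)ᵀ) ^ t
          + ∑ s ∈ Finset.range t, (A - B * K) ^ s * S1 * ((A - B * K)ᵀ) ^ s))
      =
    ∑' t : ℕ, γ ^ t •
        ((A - B * K) ^ t * (S0 + (γ / (1 - γ)) • S1) * ((A - B * K)ᵀ) ^ t) := by
  obtain ⟨hγ0, hγ1⟩ := hγ
  set M : Matrix (Fin d) (Fin d) ℝ := A - B * K with hM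
  -- norm of transpose
  have hMT : ∀ (X : Matrix (Fin d) (Fin d) ℝ), ‖Xᵀ‖ = ‖X‖ := by
    intro X
    have : Xᴴ = Xᵀ := X.conjTranspose_eq_transpose_of_trivial
    rw [← this, Matrix.l2_opNorm_conjTranspose]
  set ρ : ℝ := max γ (γ * ‖M‖ ^ 2) with hρ
  have hρ0 : 0 ≤ ρ := le_max_of_le_left hγ0.le
  have hρ1 : ρ < 1 := max_lt hγ1 hadm
  have hγρ : γ ≤ ρ := le_max_left _ _
  have hγMρ : γ * ‖M‖ ^ 2 ≤ ρ := le_max_right _ _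
  -- basic norm bound for the conjugated matrices
  have key : ∀ (X : Matrix (Fin d) (Fin d) ℝ) (s t : ℕ), s ≤ t →
      ‖γ ^ t • (M ^ s * X * (Mᵀ) ^ s)‖ ≤ ρ ^ t * ‖X‖ := by
    intro X s t hst
    have hγt : (0:ℝ) < γ ^ t := pow_pos hγ0 t
    rcases Nat.eq_zero_or_pos s with rfl | hs
    · rw [pow_zero, pow_zero, Matrix.one_mul, Matrix.mul_one, norm_smul,
        Real.norm_eq_abs, abs_of_pos hγt]
      gcongr
    · obtain ⟨u, rfl⟩ := Nat.exists_eq_add_of_le hst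
      have h2 : ‖(Mᵀ) ^ s‖ ≤ ‖M‖ ^ s := by
        rw [← Matrix.transpose_pow, hMT]
        exact norm_pow_le' _ hs
      have h3 : ‖M ^ s‖ ≤ ‖M‖ ^ s := norm_pow_le' _ hs
      have h1 : ‖M ^ s * X * (Mᵀ) ^ s‖ ≤ ‖M‖ ^ s * ‖X‖ * ‖M‖ ^ s := by
        calc ‖M ^ s * X * (Mᵀ) ^ s‖
            ≤ ‖M ^ s * X‖ * ‖(Mᵀ) ^ s‖ := norm_mul_le _ _
          _ ≤ (‖M ^ s‖ * ‖X‖) * ‖(Mᵀ) ^ s‖ := by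
              gcongr
              exact norm_mul_le _ _
          _ ≤ ‖M‖ ^ s * ‖X‖ * ‖M‖ ^ s := by gcongr
      rw [norm_smul, Real.norm_eq_abs, abs_of_pos hγt]
      calc γ ^ (s + u) * ‖M ^ s * X * (Mᵀ) ^ s‖
          ≤ γ ^ (s + u) * (‖M‖ ^ s * ‖X‖ * ‖M‖ ^ s) := by gcongr
        _ = ((γ * ‖M‖ ^ 2) ^ s * γ ^ u) * ‖X‖ := by ring
        _ ≤ (ρ ^ s * ρ ^ u) * ‖X‖ := by gcongr
        _ = ρ ^ (s + u) * ‖X‖ := by rw [← pow_add]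
  -- sequences
  set a : ℕ → Matrix (Fin d) (Fin d) ℝ := fun s => M ^ s * S1 * (Mᵀ) ^ s with ha
  set b : ℕ → Matrix (Fin d) (Fin d) ℝ := fun t => M ^ t * S0 * (Mᵀ) ^ t with hb
  set c : ℕ → Matrix (Fin d) (Fin d) ℝ := fun t => ∑ s ∈ Finset.range t, a s with hc
  have sum_geo : Summable (fun t : ℕ => ρ ^ t) :=
    summable_geometric_of_lt_one hρ0 hρ1
  have hSa : Summable (fun t : ℕ => γ ^ t • a t) := by
    apply Summable.of_norm_bounded (g := fun t => ρ ^ t * ‖S1‖) (sum_geo.mul_right _)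
    intro t; exact key S1 t t le_rfl
  have hSb : Summable (fun t : ℕ => γ ^ t • b t) := by
    apply Summable.of_norm_bounded (g := fun t => ρ ^ t * ‖S0‖) (sum_geo.mul_right _)
    intro t; exact key S0 t t le_rfl
  have hbound : Summable (fun t : ℕ => (t : ℝ) * ρ ^ t * ‖S1‖) := by
    have h := (summable_pow_mul_geometric_of_norm_lt_one 1
      (by rwa [Real.norm_eq_abs, abs_of_nonneg hρ0] : ‖ρ‖ < 1)).mul_right ‖S1‖
    exact h.congr (fun n => by simp [pow_one])
  have hSc : Summable (fun t : ℕ => γ ^ t • c t) := by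
    apply Summable.of_norm_bounded hbound
    intro t
    calc ‖γ ^ t • c t‖ = ‖∑ s ∈ Finset.range t, γ ^ t • a s‖ := by
          rw [hc, Finset.smul_sum]
      _ ≤ ∑ s ∈ Finset.range t, ‖γ ^ t • a s‖ := norm_sum_le _ _
      _ ≤ ∑ s ∈ Finset.range t, ρ ^ t * ‖S1‖ := by
          apply Finset.sum_le_sum
          intro s hs
          exact key S1 s t (Finset.mem_range.mp hs).le
      _ = (t : ℝ) * ρ ^ t * ‖S1‖ := by
          rw [Finset.sum_const, Finset.card_range, nsmul_eq_mul]; ring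
  -- the shift identity: D = γ • D + γ • Sa
  set D := ∑' t : ℕ, γ ^ t • c t with hD
  set Sa := ∑' t : ℕ, γ ^ t • a t with hSA
  have hshift : D = γ • D + γ • Sa := by
    have hc1 : ∀ t : ℕ, γ ^ (t + 1) • c (t + 1) =
        γ • (γ ^ t • c t) + γ • (γ ^ t • a t) := by
      intro t
      have h : c (t + 1) = c t + a t := Finset.sum_range_succ a t
      rw [h, smul_add, pow_succ, smul_smul, smul_smul, mul_comm]
    calc D = ∑' t : ℕ, γ ^ (t + 1) • c (t + 1) := by
          rw [hD, Summable.tsum_eq_zero_add hSc]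
          simp [hc]
      _ = ∑' t : ℕ, (γ • (γ ^ t • c t) + γ • (γ ^ t • a t)) := tsum_congr hc1
      _ = (∑' t : ℕ, γ • (γ ^ t • c t)) + ∑' t : ℕ, γ • (γ ^ t • a t) :=
          Summable.tsum_add (hSc.const_smul γ) (hSa.const_smul γ)
      _ = γ • D + γ • Sa := by rw [hD, hSA, tsum_const_smul'' γ, tsum_const_smul'' γ]
  have hγne : (1 : ℝ) - γ ≠ 0 := by intro h; linarith [sub_eq_zero.mp h]
  have hDval : D = (γ / (1 - γ)) • Sa := by
    have h1 : (1 - γ) • D = γ • Sa := by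
      rw [sub_smul, one_smul]
      nth_rewrite 1 [hshift]
      abel
    have := congrArg (fun X => (1 - γ)⁻¹ • X) h1
    simpa [smul_smul, inv_mul_cancel₀ hγne, div_eq_inv_mul, mul_comm] using this
  -- put everything together
  have LHS : (∑' t : ℕ, γ ^ t • (b t + c t)) = (∑' t : ℕ, γ ^ t • b t) + D := by
    rw [hD, ← Summable.tsum_add hSb hSc]
    exact tsum_congr fun t => smul_add _ _ _
  have RHS : ∀ t : ℕ, γ ^ t • (M ^ t * (S0 + (γ / (1 - γ)) • S1) * (Mᵀ) ^ t)
      = γ ^ t • b t + (γ / (1 - γ)) • (γ ^ t • a t) := by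
    intro t
    have h : M ^ t * (S0 + (γ / (1 - γ)) • S1) * (Mᵀ) ^ t
        = b t + (γ / (1 - γ)) • a t := by
      rw [hb, ha]
      rw [Matrix.mul_add, Matrix.add_mul, mul_smul_comm, smul_mul_assoc]
    rw [h, smul_add, smul_comm]
  calc (∑' t : ℕ, γ ^ t • (b t + c t)) = (∑' t : ℕ, γ ^ t • b t) + D := LHS
    _ = (∑' t : ℕ, γ ^ t • b t) + (γ / (1 - γ)) • Sa := by rw [hDval]
    _ = ∑' t : ℕ, (γ ^ t • b t + (γ / (1 - γ)) • (γ ^ t • a t)) := by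
        rw [hSA, ← tsum_const_smul'' (γ / (1 - γ)),
          Summable.tsum_add hSb (hSa.const_smul _)]
    _ = ∑' t : ℕ, γ ^ t • (M ^ t * (S0 + (γ / (1 - γ)) • S1) * (Mᵀ) ^ t) :=
        tsum_congr fun t => (RHS t).symm
end

section
/- The operator norms satisfy ‖P^y_K‖ ≤ C_y(K)/λ¹_y and ‖Σ^y_K‖ ≤ C_y(K)/λ_min(Q), where λ¹_y = λ_min(Σ_{y_0} + (γ/(1-γ))Σ¹) is assumed positive. -/
open scoped Matrix.Norms.L2Operator
open Matrix

/-- Minimal eigenvalue of a symmetric matrix, via the Rayleigh quotient. -/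
noncomputable def lamMin {d : ℕ} (A : Matrix (Fin d) (Fin d) ℝ) : ℝ :=
  ⨅ x : {x : Fin d → ℝ // x ≠ 0}, (x.1 ⬝ᵥ A.mulVec x.1) / (x.1 ⬝ᵥ x.1)

/-- Discounted covariance `Σ^y_K` of `y_{t+1} = (A-BK)y_t + ε¹_{t+1}`. -/
noncomputable def SigY {d l : ℕ} (γ : ℝ)
    (A : Matrix (Fin d) (Fin d) ℝ) (B : Matrix (Fin d) (Fin l) ℝ)
    (Sy0 S1 : Matrix (Fin d) (Fin d) ℝ)
    (K : Matrix (Fin l) (Fin d) ℝ) : Matrix (Fin d) (Fin d) ℝ :=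
  ∑' t : ℕ, γ ^ t •
    ((A - B * K) ^ t * Sy0 * ((A - B * K)ᵀ) ^ t
      + ∑ s ∈ Finset.range t, (A - B * K) ^ s * S1 * ((A - B * K)ᵀ) ^ s)

/-- The cost `C_y(K) = Tr((Q+KᵀRK) Σ^y_K)`
(`= E[y₀ᵀP^y_K y₀] + (γ/(1-γ)) E[(ε¹)ᵀ P^y_K ε¹]`). -/
noncomputable def Cy {d l : ℕ} (γ : ℝ)
    (A : Matrix (Fin d) (Fin d) ℝ) (B : Matrix (Fin d) (Fin l) ℝ)
    (Q : Matrix (Fin d) (Fin d) ℝ) (R : Matrix (Fin l) (Fin l) ℝ)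
    (Sy0 S1 : Matrix (Fin d) (Fin d) ℝ)
    (K : Matrix (Fin l) (Fin d) ℝ) : ℝ :=
  ((Q + Kᵀ * R * K) * SigY γ A B Sy0 S1 K).trace

namespace Stmt7Aux

variable {d : ℕ}

lemma normT (X : Matrix (Fin d) (Fin d) ℝ) : ‖Xᵀ‖ = ‖X‖ := by
  rw [← conjTranspose_eq_transpose_of_trivial]; exact Matrix.l2_opNorm_conjTranspose X

lemma norm_conj_le (M C : Matrix (Fin d) (Fin d) ℝ) (t : ℕ) :
    ‖M ^ t * C * (Mᵀ) ^ t‖ ≤ (‖M‖^2)^t * ‖C‖ := by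
  rcases Nat.eq_zero_or_pos t with h | h
  · subst h; simp
  · have h1 : ‖M ^ t‖ ≤ ‖M‖ ^ t := norm_pow_le' M h
    have h2 : ‖(Mᵀ) ^ t‖ ≤ ‖M‖ ^ t := by
      calc ‖(Mᵀ) ^ t‖ ≤ ‖Mᵀ‖ ^ t := norm_pow_le' _ h
        _ = ‖M‖ ^ t := by rw [normT]
    calc ‖M ^ t * C * (Mᵀ) ^ t‖ ≤ ‖M ^ t * C‖ * ‖(Mᵀ) ^ t‖ := norm_mul_le _ _
      _ ≤ (‖M ^ t‖ * ‖C‖) * ‖(Mᵀ) ^ t‖ :=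
          mul_le_mul_of_nonneg_right (norm_mul_le _ _) (norm_nonneg _)
      _ ≤ (‖M‖ ^ t * ‖C‖) * ‖M‖ ^ t := by
          apply mul_le_mul (mul_le_mul_of_nonneg_right h1 (norm_nonneg _)) h2 (norm_nonneg _)
          positivity
      _ = (‖M‖^2)^t * ‖C‖ := by ring

/-- The solution of the discounted Lyapunov equation as a series. -/
noncomputable def FF (γ : ℝ) (M C : Matrix (Fin d) (Fin d) ℝ) : Matrix (Fin d) (Fin d) ℝ :=
  ∑' t : ℕ, γ ^ t • (M ^ t * C * (Mᵀ) ^ t)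

noncomputable def mulLR (M N : Matrix (Fin d) (Fin d) ℝ) :
    Matrix (Fin d) (Fin d) ℝ →L[ℝ] Matrix (Fin d) (Fin d) ℝ :=
  LinearMap.toContinuousLinearMap ((LinearMap.mulRight ℝ N).comp (LinearMap.mulLeft ℝ M))

@[simp] lemma mulLR_apply (M N X : Matrix (Fin d) (Fin d) ℝ) : mulLR M N X = M * X * N := rfl

lemma norm_term_le {γ : ℝ} (hγ0 : 0 ≤ γ) (M C : Matrix (Fin d) (Fin d) ℝ) (t : ℕ) :
    ‖γ ^ t • (M ^ t * C * (Mᵀ) ^ t)‖ ≤ (γ * ‖M‖^2)^t * ‖C‖ := by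
  rw [norm_smul, Real.norm_eq_abs, abs_pow, abs_of_nonneg hγ0, mul_pow]
  calc γ ^ t * ‖M ^ t * C * (Mᵀ) ^ t‖ ≤ γ ^ t * ((‖M‖^2)^t * ‖C‖) :=
        mul_le_mul_of_nonneg_left (norm_conj_le M C t) (pow_nonneg hγ0 t)
    _ = γ ^ t * (‖M‖^2)^t * ‖C‖ := (mul_assoc _ _ _).symm

lemma summable_conj {γ : ℝ} (hγ0 : 0 ≤ γ) {M : Matrix (Fin d) (Fin d) ℝ}
    (hM : γ * ‖M‖ ^ 2 < 1) (C : Matrix (Fin d) (Fin d) ℝ) :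
    Summable (fun t : ℕ => γ ^ t • (M ^ t * C * (Mᵀ) ^ t)) :=
  Summable.of_norm_bounded
    ((summable_geometric_of_lt_one (by positivity) hM).mul_right _)
    (fun t => norm_term_le hγ0 M C t)

lemma FF_fixed {γ : ℝ} (hγ0 : 0 ≤ γ) {M : Matrix (Fin d) (Fin d) ℝ}
    (hM : γ * ‖M‖ ^ 2 < 1) (C : Matrix (Fin d) (Fin d) ℝ) :
    FF γ M C = C + γ • (M * FF γ M C * Mᵀ) := by
  have hs := summable_conj hγ0 hM C
  have key : ∀ t : ℕ, γ ^ (t+1) • (M ^ (t+1) * C * (Mᵀ) ^ (t+1))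
      = (γ • mulLR M Mᵀ) (γ ^ t • (M ^ t * C * (Mᵀ) ^ t)) := by
    intro t
    rw [pow_succ' M, pow_succ (Mᵀ), pow_succ γ]
    simp only [ContinuousLinearMap.coe_smul', Pi.smul_apply, mulLR_apply, Matrix.mul_smul,
      Matrix.smul_mul, smul_smul, mul_assoc]
    rw [mul_comm γ (γ^t)]
  have tail : (∑' t : ℕ, γ ^ (t+1) • (M ^ (t+1) * C * (Mᵀ) ^ (t+1)))
      = γ • (M * FF γ M C * Mᵀ) := by
    calc (∑' t : ℕ, γ ^ (t+1) • (M ^ (t+1) * C * (Mᵀ) ^ (t+1)))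
        = ∑' t : ℕ, (γ • mulLR M Mᵀ) (γ ^ t • (M ^ t * C * (Mᵀ) ^ t)) := tsum_congr key
      _ = (γ • mulLR M Mᵀ) (FF γ M C) := ((γ • mulLR M Mᵀ).map_tsum hs).symm
      _ = γ • (M * FF γ M C * Mᵀ) := by simp
  calc FF γ M C = γ ^ 0 • (M ^ 0 * C * (Mᵀ) ^ 0)
        + ∑' t : ℕ, γ ^ (t+1) • (M ^ (t+1) * C * (Mᵀ) ^ (t+1)) := Summable.tsum_eq_zero_add hs
    _ = C + γ • (M * FF γ M C * Mᵀ) := by rw [tail]; simp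

lemma lyap_uniq {γ : ℝ} (hγ0 : 0 ≤ γ) {M C X Y : Matrix (Fin d) (Fin d) ℝ}
    (hM : γ * ‖M‖ ^ 2 < 1)
    (hX : X = C + γ • (M * X * Mᵀ)) (hY : Y = C + γ • (M * Y * Mᵀ)) : X = Y := by
  have hD : X - Y = γ • (M * (X - Y) * Mᵀ) := by
    rw [Matrix.mul_sub, Matrix.sub_mul, smul_sub]
    calc X - Y = (C + γ • (M * X * Mᵀ)) - (C + γ • (M * Y * Mᵀ)) := by rw [← hX, ← hY]
      _ = γ • (M * X * Mᵀ) - γ • (M * Y * Mᵀ) := by abel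
  have hn : ‖X - Y‖ ≤ (γ * ‖M‖^2) * ‖X - Y‖ := by
    calc ‖X - Y‖ = ‖γ • (M * (X - Y) * Mᵀ)‖ := by rw [← hD]
      _ = γ * ‖M * (X - Y) * Mᵀ‖ := by
          rw [norm_smul, Real.norm_eq_abs, abs_of_nonneg hγ0]
      _ ≤ γ * (‖M‖ * ‖X - Y‖ * ‖Mᵀ‖) := by
          apply mul_le_mul_of_nonneg_left _ hγ0
          calc ‖M * (X - Y) * Mᵀ‖ ≤ ‖M * (X - Y)‖ * ‖Mᵀ‖ := norm_mul_le _ _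
            _ ≤ ‖M‖ * ‖X - Y‖ * ‖Mᵀ‖ :=
              mul_le_mul_of_nonneg_right (norm_mul_le _ _) (norm_nonneg _)
      _ = (γ * ‖M‖^2) * ‖X - Y‖ := by rw [normT]; ring
  have hz : ‖X - Y‖ = 0 := by nlinarith [norm_nonneg (X - Y)]
  exact sub_eq_zero.mp (norm_eq_zero.mp hz)

lemma psd_smul {c : ℝ} (hc : 0 ≤ c) {X : Matrix (Fin d) (Fin d) ℝ} (hX : X.PosSemidef) :
    (c • X).PosSemidef := by
  refine Matrix.PosSemidef.of_dotProduct_mulVec_nonneg ?_ ?_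
  · show (c • X)ᴴ = c • X
    rw [conjTranspose_smul, hX.1.eq, star_trivial]
  · intro x
    rw [smul_mulVec, dotProduct_smul]
    exact smul_nonneg hc (hX.dotProduct_mulVec_nonneg x)

/-- transpose as a continuous linear map -/
noncomputable def transCLM : Matrix (Fin d) (Fin d) ℝ →L[ℝ] Matrix (Fin d) (Fin d) ℝ :=
  LinearMap.toContinuousLinearMap
    { toFun := fun X => Xᵀ
      map_add' := fun X Y => Matrix.transpose_add X Y
      map_smul' := fun c X => Matrix.transpose_smul c X }

@[simp] lemma transCLM_apply (X : Matrix (Fin d) (Fin d) ℝ) : transCLM X = Xᵀ := rfl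

/-- quadratic form evaluation as a continuous linear map -/
noncomputable def quadCLM (x : Fin d → ℝ) : Matrix (Fin d) (Fin d) ℝ →L[ℝ] ℝ :=
  LinearMap.toContinuousLinearMap
    { toFun := fun X => x ⬝ᵥ X.mulVec x
      map_add' := fun X Y => by rw [Matrix.add_mulVec, dotProduct_add]
      map_smul' := fun c X => by
        simp only [RingHom.id_apply]
        rw [Matrix.smul_mulVec, dotProduct_smul, smul_eq_mul]
      }

@[simp] lemma quadCLM_apply (x : Fin d → ℝ) (X : Matrix (Fin d) (Fin d) ℝ) :
    quadCLM x X = x ⬝ᵥ X.mulVec x := rfl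

lemma posSemidef_tsum {f : ℕ → Matrix (Fin d) (Fin d) ℝ} (hs : Summable f)
    (h : ∀ t, (f t).PosSemidef) : (∑' t, f t).PosSemidef := by
  refine Matrix.PosSemidef.of_dotProduct_mulVec_nonneg ?_ ?_
  · show (∑' t, f t)ᴴ = ∑' t, f t
    rw [conjTranspose_eq_transpose_of_trivial]
    calc (∑' t, f t)ᵀ = transCLM (∑' t, f t) := rfl
      _ = ∑' t, transCLM (f t) := transCLM.map_tsum hs
      _ = ∑' t, f t := by
          apply tsum_congr; intro t
          rw [transCLM_apply, ← conjTranspose_eq_transpose_of_trivial, (h t).1.eq]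
  · intro x
    rw [star_trivial]
    calc (0:ℝ) ≤ ∑' t, quadCLM x (f t) := by
          apply tsum_nonneg; intro t
          simpa [quadCLM_apply] using (star_trivial x ▸ (h t).dotProduct_mulVec_nonneg x)
      _ = quadCLM x (∑' t, f t) := ((quadCLM x).map_tsum hs).symm
      _ = x ⬝ᵥ (∑' t, f t).mulVec x := rfl

lemma FF_psd {γ : ℝ} (hγ0 : 0 ≤ γ) {M : Matrix (Fin d) (Fin d) ℝ}
    (hM : γ * ‖M‖ ^ 2 < 1) {C : Matrix (Fin d) (Fin d) ℝ} (hC : C.PosSemidef) :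
    (FF γ M C).PosSemidef := by
  apply posSemidef_tsum (summable_conj hγ0 hM C)
  intro t
  apply psd_smul (pow_nonneg hγ0 t)
  have := hC.mul_mul_conjTranspose_same (M ^ t)
  rwa [conjTranspose_eq_transpose_of_trivial, transpose_pow] at this

lemma psd_trace_nonneg {X : Matrix (Fin d) (Fin d) ℝ} (hX : X.PosSemidef) : 0 ≤ X.trace := by
  rw [Matrix.trace]
  apply Finset.sum_nonneg
  intro i _
  have := hX.dotProduct_mulVec_nonneg (Pi.single i 1)
  rw [star_trivial] at this
  simpa [Matrix.mulVec_single, dotProduct, Pi.single_apply] using this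

section
open scoped MatrixOrder
lemma psd_eq_ct_mul_self {X : Matrix (Fin d) (Fin d) ℝ} (hX : X.PosSemidef) :
    ∃ B : Matrix (Fin d) (Fin d) ℝ, X = Bᴴ * B :=
  CStarAlgebra.nonneg_iff_eq_star_mul_self.mp hX.nonneg
end

lemma psd_trace_mul_nonneg {X Y : Matrix (Fin d) (Fin d) ℝ}
    (hX : X.PosSemidef) (hY : Y.PosSemidef) : 0 ≤ (X * Y).trace := by
  obtain ⟨B, hB⟩ := psd_eq_ct_mul_self hX
  have h1 : (X * Y).trace = (B * Y * Bᴴ).trace := by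
    rw [hB, Matrix.mul_assoc, Matrix.trace_mul_comm]
  rw [h1]
  exact psd_trace_nonneg (hY.mul_mul_conjTranspose_same B)

lemma dp_self_nonneg (x : Fin d → ℝ) : 0 ≤ x ⬝ᵥ x :=
  Finset.sum_nonneg fun i _ => mul_self_nonneg _

lemma dp_self_pos {x : Fin d → ℝ} (hx : x ≠ 0) : 0 < x ⬝ᵥ x :=
  lt_of_le_of_ne (dp_self_nonneg x) (fun h => hx (dotProduct_self_eq_zero.mp h.symm))

lemma lamMin_mul_le {X : Matrix (Fin d) (Fin d) ℝ} (hX : X.PosSemidef) (x : Fin d → ℝ) :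
    lamMin X * (x ⬝ᵥ x) ≤ x ⬝ᵥ X.mulVec x := by
  rcases eq_or_ne x 0 with rfl | hx
  · simp
  · have hpos : 0 < x ⬝ᵥ x := dp_self_pos hx
    have hb : BddBelow (Set.range fun y : {x : Fin d → ℝ // x ≠ 0} =>
        (y.1 ⬝ᵥ X.mulVec y.1) / (y.1 ⬝ᵥ y.1)) := by
      refine ⟨0, ?_⟩
      rintro _ ⟨y, rfl⟩
      have h1 : 0 ≤ y.1 ⬝ᵥ X.mulVec y.1 := star_trivial y.1 ▸ hX.dotProduct_mulVec_nonneg y.1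
      exact div_nonneg h1 (dp_self_nonneg y.1)
    have hle : lamMin X ≤ (x ⬝ᵥ X.mulVec x) / (x ⬝ᵥ x) := ciInf_le hb ⟨x, hx⟩
    rw [le_div_iff₀ hpos] at hle
    exact hle

lemma sub_lamMin_psd {X : Matrix (Fin d) (Fin d) ℝ} (hX : X.PosSemidef) :
    (X - lamMin X • 1).PosSemidef := by
  refine Matrix.PosSemidef.of_dotProduct_mulVec_nonneg ?_ ?_
  · show (X - lamMin X • 1)ᴴ = X - lamMin X • 1
    rw [conjTranspose_sub, conjTranspose_smul, conjTranspose_one, hX.1.eq, star_trivial]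
  · intro x
    rw [star_trivial, Matrix.sub_mulVec, dotProduct_sub, Matrix.smul_mulVec,
      Matrix.one_mulVec, dotProduct_smul, smul_eq_mul]
    have := lamMin_mul_le hX x
    linarith

lemma lamMin_trace_le_trace_mul {X Y : Matrix (Fin d) (Fin d) ℝ}
    (hX : X.PosSemidef) (hY : Y.PosSemidef) :
    lamMin X * Y.trace ≤ (X * Y).trace := by
  have h : 0 ≤ ((X - lamMin X • 1) * Y).trace :=
    psd_trace_mul_nonneg (sub_lamMin_psd hX) hY
  rw [Matrix.sub_mul, Matrix.trace_sub, Matrix.smul_mul, Matrix.one_mul, Matrix.trace_smul,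
    smul_eq_mul] at h
  linarith

lemma lamMin_pos_of_posDef (hd : 0 < d) {Q : Matrix (Fin d) (Fin d) ℝ} (hQ : Q.PosDef) :
    0 < lamMin Q := by
  haveI : Nonempty (Fin d) := ⟨⟨0, hd⟩⟩
  have hcont1 : Continuous fun x : Fin d → ℝ => x ⬝ᵥ Q.mulVec x := by
    have heq : (fun x : Fin d → ℝ => x ⬝ᵥ Q.mulVec x)
        = fun x : Fin d → ℝ => ∑ i, x i * ∑ j, Q i j * x j := by
      funext x
      simp [dotProduct, Matrix.mulVec]
    rw [heq]
    apply continuous_finset_sum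
    intro i _
    exact (continuous_apply i).mul
      (continuous_finset_sum _ fun j _ => continuous_const.mul (continuous_apply j))
  have hcont2 : Continuous fun x : Fin d → ℝ => x ⬝ᵥ x := by
    apply continuous_finset_sum
    intro i _
    exact (continuous_apply i).mul (continuous_apply i)
  set S : Set (Fin d → ℝ) := Metric.sphere 0 1 with hS
  have hcS : IsCompact S := isCompact_sphere 0 1
  have hneS : S.Nonempty := NormedSpace.sphere_nonempty.mpr zero_le_one
  have hne0 : ∀ y ∈ S, y ≠ 0 := by
    intro y hy h0
    rw [hS] at hy
    simp [h0] at hy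
  have hcf : ContinuousOn (fun x : Fin d → ℝ => (x ⬝ᵥ Q.mulVec x) / (x ⬝ᵥ x)) S := by
    apply ContinuousOn.div hcont1.continuousOn hcont2.continuousOn
    intro y hy
    exact ne_of_gt (dp_self_pos (hne0 y hy))
  obtain ⟨x₀, hx₀S, hmin⟩ := hcS.exists_isMinOn hneS hcf
  set c := (x₀ ⬝ᵥ Q.mulVec x₀) / (x₀ ⬝ᵥ x₀) with hc
  have hcpos : 0 < c := div_pos (hQ.dotProduct_mulVec_pos (hne0 x₀ hx₀S)) (dp_self_pos (hne0 x₀ hx₀S))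
  haveI : Nonempty {x : Fin d → ℝ // x ≠ 0} := by
    refine ⟨⟨Pi.single ⟨0, hd⟩ 1, fun h => ?_⟩⟩
    have := congrFun h ⟨0, hd⟩
    simp at this
  have hlow : c ≤ lamMin Q := by
    apply le_ciInf
    intro y
    obtain ⟨y, hy⟩ := y
    have hny : ‖y‖ ≠ 0 := fun h => hy (norm_eq_zero.mp h)
    set z := ‖y‖⁻¹ • y with hz
    have hzS : z ∈ S := by
      rw [hS, Metric.mem_sphere, dist_zero_right, hz, norm_smul, norm_inv, norm_norm]
      field_simp
    have hrne : ‖y‖⁻¹ ≠ 0 := inv_ne_zero hny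
    have heq : (z ⬝ᵥ Q.mulVec z) / (z ⬝ᵥ z) = (y ⬝ᵥ Q.mulVec y) / (y ⬝ᵥ y) := by
      rw [hz]
      simp only [smul_dotProduct, dotProduct_smul, Matrix.mulVec_smul, smul_eq_mul]
      rw [mul_div_mul_left _ _ hrne, mul_div_mul_left _ _ hrne]
    calc c ≤ (z ⬝ᵥ Q.mulVec z) / (z ⬝ᵥ z) := hmin hzS
      _ = (y ⬝ᵥ Q.mulVec y) / (y ⬝ᵥ y) := heq
  linarith

lemma lamMin_zero_of_d_eq_zero (h : d = 0) (A : Matrix (Fin d) (Fin d) ℝ) : lamMin A = 0 := by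
  subst h
  haveI : IsEmpty {x : Fin 0 → ℝ // x ≠ 0} := by
    constructor
    rintro ⟨x, hx⟩
    exact hx (funext fun i => absurd i.2 (by omega))
  rw [lamMin, Real.iInf_of_isEmpty]

lemma opNorm_le_sqrt_sum_sq (B : Matrix (Fin d) (Fin d) ℝ) :
    ‖B‖ ≤ Real.sqrt (∑ i, ∑ j, B i j ^ 2) := by
  rw [Matrix.l2_opNorm_def]
  apply ContinuousLinearMap.opNorm_le_bound _ (Real.sqrt_nonneg _)
  intro x
  have hx : ‖x‖ = Real.sqrt (∑ j, x j ^ 2) := by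
    rw [EuclideanSpace.norm_eq]
    congr 1; apply Finset.sum_congr rfl; intro j _; rw [Real.norm_eq_abs, sq_abs]
  have happ : ‖(LinearEquiv.trans Matrix.toEuclideanLin
      LinearMap.toContinuousLinearMap B) x‖
      = Real.sqrt (∑ i, (B.mulVec x i) ^ 2) := by
    rw [EuclideanSpace.norm_eq]
    congr 1; apply Finset.sum_congr rfl; intro i _; rw [Real.norm_eq_abs, sq_abs]; rfl
  rw [happ, hx, ← Real.sqrt_mul (by positivity)]
  apply Real.sqrt_le_sqrt
  rw [Finset.sum_mul]
  apply Finset.sum_le_sum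
  intro i _
  have key : (∑ j, B i j * x j) ^ 2 ≤ (∑ j, B i j ^ 2) * (∑ j, x j ^ 2) :=
    Finset.sum_mul_sq_le_sq_mul_sq Finset.univ (fun j => B i j) (fun j => x j)
  calc (B.mulVec x) i ^ 2 = (∑ j, B i j * x j) ^ 2 := by rw [Matrix.mulVec, dotProduct]
    _ ≤ (∑ j, B i j ^ 2) * (∑ j, x j ^ 2) := key

lemma psd_norm_le_trace {X : Matrix (Fin d) (Fin d) ℝ} (hX : X.PosSemidef) :
    ‖X‖ ≤ X.trace := by
  obtain ⟨B, hB⟩ := psd_eq_ct_mul_self hX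
  have htr : X.trace = ∑ i, ∑ j, B i j ^ 2 := by
    rw [hB, Matrix.trace]
    rw [Finset.sum_comm]
    apply Finset.sum_congr rfl
    intro j _
    simp [Matrix.diag, Matrix.mul_apply, Matrix.conjTranspose_apply, sq]
  have hnn : (0:ℝ) ≤ ∑ i, ∑ j, B i j ^ 2 := by positivity
  have h1 : ‖X‖ = ‖B‖ * ‖B‖ := by rw [hB]; exact Matrix.l2_opNorm_conjTranspose_mul_self B
  have h2 : ‖B‖ ≤ Real.sqrt (∑ i, ∑ j, B i j ^ 2) := opNorm_le_sqrt_sum_sq B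
  calc ‖X‖ = ‖B‖ * ‖B‖ := h1
    _ ≤ Real.sqrt (∑ i, ∑ j, B i j ^ 2) * Real.sqrt (∑ i, ∑ j, B i j ^ 2) :=
        mul_le_mul h2 h2 (norm_nonneg _) (Real.sqrt_nonneg _)
    _ = ∑ i, ∑ j, B i j ^ 2 := Real.mul_self_sqrt hnn
    _ = X.trace := htr.symm

lemma summable_g {γ : ℝ} (hγ0 : 0 < γ) (hγ1 : γ < 1) {M : Matrix (Fin d) (Fin d) ℝ}
    (hM : γ * ‖M‖ ^ 2 < 1) (Sy0 S1 : Matrix (Fin d) (Fin d) ℝ) :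
    Summable (fun t : ℕ => γ ^ t •
      (M ^ t * Sy0 * (Mᵀ) ^ t + ∑ s ∈ Finset.range t, M ^ s * S1 * (Mᵀ) ^ s)) := by
  set m : ℝ := max (‖M‖^2) 1 with hm
  have hm1 : (1:ℝ) ≤ m := le_max_right _ _
  have hr0 : 0 ≤ γ * m := by positivity
  have hr1 : γ * m < 1 := by
    rcases max_cases (‖M‖^2) 1 with ⟨h1, h2⟩ | ⟨h1, h2⟩
    · rw [hm, h1]; exact hM
    · rw [hm, h1, mul_one]; exact hγ1
  have hbnd : ∀ t : ℕ, ‖γ ^ t •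
      (M ^ t * Sy0 * (Mᵀ) ^ t + ∑ s ∈ Finset.range t, M ^ s * S1 * (Mᵀ) ^ s)‖
      ≤ (γ*m) ^ t * ‖Sy0‖ + (t:ℝ) * (γ*m) ^ t * ‖S1‖ := by
    intro t
    have hMm : ∀ s : ℕ, s ≤ t → (‖M‖^2)^s ≤ m^t := by
      intro s hs
      calc (‖M‖^2)^s ≤ m^s := pow_le_pow_left₀ (by positivity) (le_max_left _ _) s
        _ ≤ m^t := pow_le_pow_right₀ hm1 hs
    have h1 : ‖M ^ t * Sy0 * (Mᵀ) ^ t‖ ≤ m^t * ‖Sy0‖ :=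
      le_trans (norm_conj_le M Sy0 t)
        (mul_le_mul_of_nonneg_right (hMm t le_rfl) (norm_nonneg _))
    have h2 : ‖∑ s ∈ Finset.range t, M ^ s * S1 * (Mᵀ) ^ s‖ ≤ (t:ℝ) * (m^t * ‖S1‖) := by
      calc ‖∑ s ∈ Finset.range t, M ^ s * S1 * (Mᵀ) ^ s‖
          ≤ ∑ s ∈ Finset.range t, ‖M ^ s * S1 * (Mᵀ) ^ s‖ := norm_sum_le _ _
        _ ≤ ∑ s ∈ Finset.range t, m^t * ‖S1‖ := by
            apply Finset.sum_le_sum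
            intro s hs
            exact le_trans (norm_conj_le M S1 s)
              (mul_le_mul_of_nonneg_right (hMm s (Finset.mem_range.mp hs).le) (norm_nonneg _))
        _ = (t:ℝ) * (m^t * ‖S1‖) := by rw [Finset.sum_const, Finset.card_range, nsmul_eq_mul]
    calc ‖γ ^ t • (M ^ t * Sy0 * (Mᵀ) ^ t + ∑ s ∈ Finset.range t, M ^ s * S1 * (Mᵀ) ^ s)‖
        = γ^t * ‖M ^ t * Sy0 * (Mᵀ) ^ t + ∑ s ∈ Finset.range t, M ^ s * S1 * (Mᵀ) ^ s‖ := by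
          rw [norm_smul, Real.norm_eq_abs, abs_pow, abs_of_nonneg hγ0.le]
      _ ≤ γ^t * (m^t * ‖Sy0‖ + (t:ℝ) * (m^t * ‖S1‖)) := by
          apply mul_le_mul_of_nonneg_left _ (by positivity)
          exact le_trans (norm_add_le _ _) (add_le_add h1 h2)
      _ = (γ*m) ^ t * ‖Sy0‖ + (t:ℝ) * (γ*m) ^ t * ‖S1‖ := by rw [mul_pow]; ring
  apply Summable.of_norm_bounded _ hbnd
  apply Summable.add
  · exact (summable_geometric_of_lt_one hr0 hr1).mul_right _
  · have := summable_pow_mul_geometric_of_norm_lt_one 1 (r := γ*m)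
      (by rwa [Real.norm_eq_abs, abs_of_nonneg hr0])
    have h' : Summable (fun t : ℕ => (t:ℝ) * (γ*m)^t) := by
      simpa [pow_one] using this
    exact h'.mul_right _

lemma g_rec {γ : ℝ} (M S1 Sy0 : Matrix (Fin d) (Fin d) ℝ) (t : ℕ) :
    γ^(t+1) • (M^(t+1) * Sy0 * (Mᵀ)^(t+1) + ∑ s ∈ Finset.range (t+1), M^s * S1 * (Mᵀ)^s)
    = γ • (M * (γ^t • (M^t * Sy0 * (Mᵀ)^t + ∑ s ∈ Finset.range t, M^s * S1 * (Mᵀ)^s)) * Mᵀ)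
      + γ^(t+1) • S1 := by
  have hstep : ∀ (s : ℕ) (C : Matrix (Fin d) (Fin d) ℝ),
      M^(s+1) * C * (Mᵀ)^(s+1) = M * (M^s * C * (Mᵀ)^s) * Mᵀ := by
    intro s C
    rw [pow_succ' M, pow_succ (Mᵀ)]
    simp only [Matrix.mul_assoc]
  rw [Finset.sum_range_succ']
  simp only [pow_zero, Matrix.one_mul, Matrix.mul_one, hstep]
  simp only [Matrix.mul_add, Matrix.add_mul, Finset.mul_sum, Finset.sum_mul,
    Matrix.mul_smul, Matrix.smul_mul, smul_smul, smul_add, pow_succ γ, mul_comm γ (γ^t)]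
  abel

lemma g_tsum_eq {γ : ℝ} (hγ0 : 0 < γ) (hγ1 : γ < 1) {M : Matrix (Fin d) (Fin d) ℝ}
    (hM : γ * ‖M‖ ^ 2 < 1) (Sy0 S1 : Matrix (Fin d) (Fin d) ℝ) :
    (∑' t : ℕ, γ ^ t •
      (M ^ t * Sy0 * (Mᵀ) ^ t + ∑ s ∈ Finset.range t, M ^ s * S1 * (Mᵀ) ^ s))
    = FF γ M (Sy0 + (γ / (1 - γ)) • S1) := by
  set g : ℕ → Matrix (Fin d) (Fin d) ℝ := fun t => γ ^ t •
      (M ^ t * Sy0 * (Mᵀ) ^ t + ∑ s ∈ Finset.range t, M ^ s * S1 * (Mᵀ) ^ s) with hg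
  have hgs : Summable g := summable_g hγ0 hγ1 hM Sy0 S1
  set T : Matrix (Fin d) (Fin d) ℝ := ∑' t, g t with hT
  have h1γ : (0:ℝ) < 1 - γ := by linarith
  -- the two pieces of the shifted series
  have hsa : Summable (fun t => (γ • mulLR M Mᵀ) (g t)) :=
    hgs.map ((γ • mulLR M Mᵀ) : _ →L[ℝ] _).toLinearMap.toAddMonoidHom
      ((γ • mulLR M Mᵀ)).continuous
  have hsb : Summable (fun t : ℕ => γ^(t+1) • S1) := by
    apply Summable.smul_const
    have : Summable (fun t : ℕ => γ * γ^t) :=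
      (summable_geometric_of_lt_one hγ0.le hγ1).mul_left γ
    simpa [pow_succ, mul_comm] using this
  have hfix : T = (Sy0 + (γ / (1 - γ)) • S1) + γ • (M * T * Mᵀ) := by
    have hshift : T = g 0 + ∑' t, g (t+1) := Summable.tsum_eq_zero_add hgs
    have hg0 : g 0 = Sy0 := by simp [hg]
    have hsplit : (∑' t, g (t+1))
        = (∑' t, (γ • mulLR M Mᵀ) (g t)) + ∑' t : ℕ, γ^(t+1) • S1 := by
      rw [← Summable.tsum_add hsa hsb]
      apply tsum_congr
      intro t
      have := g_rec (γ := γ) M S1 Sy0 t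
      simpa [hg] using this
    have hA : (∑' t, (γ • mulLR M Mᵀ) (g t)) = γ • (M * T * Mᵀ) := by
      rw [← ((γ • mulLR M Mᵀ)).map_tsum hgs]
      simp [hT]
    have hB : (∑' t : ℕ, γ^(t+1) • S1) = (γ / (1 - γ)) • S1 := by
      rw [Summable.tsum_smul_const]
      · congr 1
        have : (∑' t : ℕ, γ^(t+1)) = γ * ∑' t : ℕ, γ^t := by
          rw [← tsum_mul_left]
          apply tsum_congr
          intro t
          rw [pow_succ, mul_comm]
        rw [this, tsum_geometric_of_lt_one hγ0.le hγ1, div_eq_mul_inv]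
      · have : Summable (fun t : ℕ => γ * γ^t) :=
          (summable_geometric_of_lt_one hγ0.le hγ1).mul_left γ
        simpa [pow_succ, mul_comm] using this
    have hTeq : T = Sy0 + (γ • (M * T * Mᵀ) + (γ / (1 - γ)) • S1) := by
      conv_lhs => rw [hshift, hg0, hsplit, hA, hB]
    exact hTeq.trans (by abel)
  exact lyap_uniq hγ0.le hM hfix (FF_fixed hγ0.le hM _)

/-- trace of (W * ·) as a continuous linear map -/
noncomputable def traceMulLeftCLM (W : Matrix (Fin d) (Fin d) ℝ) :
    Matrix (Fin d) (Fin d) ℝ →L[ℝ] ℝ :=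
  LinearMap.toContinuousLinearMap
    ((Matrix.traceLinearMap (Fin d) ℝ ℝ).comp (LinearMap.mulLeft ℝ W))

@[simp] lemma traceMulLeftCLM_apply (W X : Matrix (Fin d) (Fin d) ℝ) :
    traceMulLeftCLM W X = (W * X).trace := rfl

/-- trace of (· * W) as a continuous linear map -/
noncomputable def traceMulRightCLM (W : Matrix (Fin d) (Fin d) ℝ) :
    Matrix (Fin d) (Fin d) ℝ →L[ℝ] ℝ :=
  LinearMap.toContinuousLinearMap
    ((Matrix.traceLinearMap (Fin d) ℝ ℝ).comp (LinearMap.mulRight ℝ W))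

@[simp] lemma traceMulRightCLM_apply (W X : Matrix (Fin d) (Fin d) ℝ) :
    traceMulRightCLM W X = (X * W).trace := rfl

lemma trace_identity {γ : ℝ} (hγ0 : 0 < γ) {M : Matrix (Fin d) (Fin d) ℝ}
    (hM : γ * ‖M‖ ^ 2 < 1) (Qt Sgm : Matrix (Fin d) (Fin d) ℝ) :
    (Qt * FF γ M Sgm).trace = (FF γ Mᵀ Qt * Sgm).trace := by
  have hMT : γ * ‖Mᵀ‖ ^ 2 < 1 := by rw [normT]; exact hM
  have hL : (Qt * FF γ M Sgm).trace
      = ∑' t : ℕ, γ ^ t * (Qt * (M ^ t * Sgm * (Mᵀ) ^ t)).trace := by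
    calc (Qt * FF γ M Sgm).trace
        = traceMulLeftCLM Qt (∑' t : ℕ, γ ^ t • (M ^ t * Sgm * (Mᵀ) ^ t)) := rfl
      _ = ∑' t : ℕ, traceMulLeftCLM Qt (γ ^ t • (M ^ t * Sgm * (Mᵀ) ^ t)) :=
          (traceMulLeftCLM Qt).map_tsum (summable_conj hγ0.le hM Sgm)
      _ = ∑' t : ℕ, γ ^ t * (Qt * (M ^ t * Sgm * (Mᵀ) ^ t)).trace := by
          apply tsum_congr
          intro t
          rw [_root_.map_smul, smul_eq_mul, traceMulLeftCLM_apply]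
  have hR : (FF γ Mᵀ Qt * Sgm).trace
      = ∑' t : ℕ, γ ^ t * ((Mᵀ ^ t * Qt * (Mᵀᵀ) ^ t) * Sgm).trace := by
    calc (FF γ Mᵀ Qt * Sgm).trace
        = traceMulRightCLM Sgm (∑' t : ℕ, γ ^ t • (Mᵀ ^ t * Qt * (Mᵀᵀ) ^ t)) := rfl
      _ = ∑' t : ℕ, traceMulRightCLM Sgm (γ ^ t • (Mᵀ ^ t * Qt * (Mᵀᵀ) ^ t)) :=
          (traceMulRightCLM Sgm).map_tsum (summable_conj hγ0.le hMT Qt)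
      _ = ∑' t : ℕ, γ ^ t * ((Mᵀ ^ t * Qt * (Mᵀᵀ) ^ t) * Sgm).trace := by
          apply tsum_congr
          intro t
          rw [_root_.map_smul, smul_eq_mul, traceMulRightCLM_apply]
  rw [hL, hR]
  apply tsum_congr
  intro t
  congr 1
  rw [transpose_transpose]
  have e1 : Qt * (M ^ t * Sgm * (Mᵀ) ^ t) = (Qt * (M ^ t * Sgm)) * (Mᵀ) ^ t := by
    simp only [Matrix.mul_assoc]
  have e2 : (Mᵀ) ^ t * Qt * M ^ t * Sgm = (Mᵀ) ^ t * (Qt * (M ^ t * Sgm)) := by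
    simp only [Matrix.mul_assoc]
  rw [e1, Matrix.trace_mul_comm, e2]

end Stmt7Aux

open Stmt7Aux

/-- The cost `C_y(K) = Tr((Q+KᵀRK) Σ^y_K)`
(`= E[y₀ᵀP^y_K y₀] + (γ/(1-γ)) E[(ε¹)ᵀ P^y_K ε¹]`). -/
theorem stmt_7 {d l : ℕ} (γ : ℝ) (hγ : γ ∈ Set.Ioo (0:ℝ) 1)
    (A : Matrix (Fin d) (Fin d) ℝ) (B : Matrix (Fin d) (Fin l) ℝ)
    (Q : Matrix (Fin d) (Fin d) ℝ) (R : Matrix (Fin l) (Fin l) ℝ)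
    (hQ : Q.PosDef) (hR : R.PosSemidef)
    (Sy0 S1 : Matrix (Fin d) (Fin d) ℝ)
    (hSy0 : Sy0.PosSemidef) (hS1 : S1.PosSemidef)
    (K : Matrix (Fin l) (Fin d) ℝ)
    (hK : γ * ‖A - B * K‖ ^ 2 < 1)
    (P : Matrix (Fin d) (Fin d) ℝ)
    (hP : P = Q + Kᵀ * R * K + γ • ((A - B * K)ᵀ * P * (A - B * K)))
    (hlam : 0 < lamMin (Sy0 + (γ / (1 - γ)) • S1)) :
    ‖P‖ ≤ Cy γ A B Q R Sy0 S1 K / lamMin (Sy0 + (γ / (1 - γ)) • S1)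
    ∧ ‖SigY γ A B Sy0 S1 K‖ ≤ Cy γ A B Q R Sy0 S1 K / lamMin Q := by
  obtain ⟨hγ0, hγ1⟩ := hγ
  rcases Nat.eq_zero_or_pos d with hd | hd
  · exact absurd hlam (by rw [lamMin_zero_of_d_eq_zero hd]; exact lt_irrefl 0)
  set M : Matrix (Fin d) (Fin d) ℝ := A - B * K with hM
  set Qt : Matrix (Fin d) (Fin d) ℝ := Q + Kᵀ * R * K with hQt
  set Sgm : Matrix (Fin d) (Fin d) ℝ := Sy0 + (γ / (1 - γ)) • S1 with hSgm
  have h1γ : (0:ℝ) < 1 - γ := by linarith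
  have hcnn : (0:ℝ) ≤ γ / (1 - γ) := div_nonneg hγ0.le h1γ.le
  have hSgpsd : Sgm.PosSemidef := hSy0.add (psd_smul hcnn hS1)
  have hKRK : (Kᵀ * R * K).PosSemidef := by
    have := hR.conjTranspose_mul_mul_same K
    rwa [conjTranspose_eq_transpose_of_trivial] at this
  have hQtpsd : Qt.PosSemidef := hQ.posSemidef.add hKRK
  have hMT : γ * ‖Mᵀ‖ ^ 2 < 1 := by rw [normT]; exact hK
  -- P is the series solution
  have hPfix : P = Qt + γ • (Mᵀ * P * (Mᵀ)ᵀ) := by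
    rw [transpose_transpose]
    exact hP
  have hPF : P = FF γ Mᵀ Qt := lyap_uniq hγ0.le hMT hPfix (FF_fixed hγ0.le hMT Qt)
  have hPpsd : P.PosSemidef := hPF ▸ FF_psd hγ0.le hMT hQtpsd
  -- SigY is the series solution
  have hSigY : SigY γ A B Sy0 S1 K = FF γ M Sgm := g_tsum_eq hγ0 hγ1 hK Sy0 S1
  have hSpsd : (SigY γ A B Sy0 S1 K).PosSemidef := by
    rw [hSigY]; exact FF_psd hγ0.le hK hSgpsd
  -- the cost identity
  have hCy : Cy γ A B Q R Sy0 S1 K = (P * Sgm).trace := by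
    rw [Cy, hSigY, hPF]
    exact trace_identity hγ0 hK Qt Sgm
  constructor
  · -- first inequality
    have hchain : lamMin Sgm * ‖P‖ ≤ Cy γ A B Q R Sy0 S1 K := by
      calc lamMin Sgm * ‖P‖ ≤ lamMin Sgm * P.trace :=
            mul_le_mul_of_nonneg_left (psd_norm_le_trace hPpsd) hlam.le
        _ ≤ (Sgm * P).trace := lamMin_trace_le_trace_mul hSgpsd hPpsd
        _ = (P * Sgm).trace := Matrix.trace_mul_comm _ _
        _ = Cy γ A B Q R Sy0 S1 K := hCy.symm
    rw [le_div_iff₀ hlam]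
    linarith [hchain]
  · -- second inequality
    have hlamQ : 0 < lamMin Q := lamMin_pos_of_posDef hd hQ
    have hsplit : Cy γ A B Q R Sy0 S1 K
        = (Q * SigY γ A B Sy0 S1 K).trace + ((Kᵀ * R * K) * SigY γ A B Sy0 S1 K).trace := by
      rw [Cy, Matrix.add_mul, Matrix.trace_add]
    have h2 : 0 ≤ ((Kᵀ * R * K) * SigY γ A B Sy0 S1 K).trace :=
      psd_trace_mul_nonneg hKRK hSpsd
    have hchain : lamMin Q * ‖SigY γ A B Sy0 S1 K‖ ≤ Cy γ A B Q R Sy0 S1 K := by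
      calc lamMin Q * ‖SigY γ A B Sy0 S1 K‖ ≤ lamMin Q * (SigY γ A B Sy0 S1 K).trace :=
            mul_le_mul_of_nonneg_left (psd_norm_le_trace hSpsd) hlamQ.le
        _ ≤ (Q * SigY γ A B Sy0 S1 K).trace := lamMin_trace_le_trace_mul hQ.posSemidef hSpsd
        _ ≤ Cy γ A B Q R Sy0 S1 K := by rw [hsplit]; linarith
    rw [le_div_iff₀ hlamQ]
    linarith [hchain]
end

section
/- If ‖T^y_K‖·‖F^y_K - F^y_{K'}‖ ≤ η < 1, then for any positive semidefinite matrix X: ‖(T^y_K - T^y_{K'})(X)‖ ≤ (1/(1-η))‖T^y_K‖·‖F^y_K - F^y_{K'}‖·‖T^y_K(X)‖ ≤ (η/(1-η))‖T^y_K(X)‖. -/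
open scoped Matrix.Norms.L2Operator
open Matrix

/-- Operator norm of a map on `d×d` matrices induced by the spectral norm. -/
noncomputable def opN {d : ℕ}
    (f : Matrix (Fin d) (Fin d) ℝ → Matrix (Fin d) (Fin d) ℝ) : ℝ :=
  ⨆ X : {X : Matrix (Fin d) (Fin d) ℝ // ‖X‖ ≤ 1}, ‖f X.1‖

section aux

variable {d : ℕ}

private lemma norm_tr (M : Matrix (Fin d) (Fin d) ℝ) : ‖Mᵀ‖ = ‖M‖ := by
  rw [← conjTranspose_eq_transpose_of_trivial, l2_opNorm_conjTranspose]

/-- the `t`-th term of the series defining `T`. -/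
private noncomputable def gg (γ : ℝ) (M Y : Matrix (Fin d) (Fin d) ℝ) (t : ℕ) :
    Matrix (Fin d) (Fin d) ℝ :=
  γ ^ t • (M ^ t * Y * (Mᵀ) ^ t)

private lemma gg_zero (γ : ℝ) (M Y : Matrix (Fin d) (Fin d) ℝ) : gg γ M Y 0 = Y := by
  simp [gg]

private lemma gg_succ (γ : ℝ) (M Y : Matrix (Fin d) (Fin d) ℝ) (t : ℕ) :
    gg γ M Y (t + 1) = γ • (M * gg γ M Y t * Mᵀ) := by
  unfold gg
  rw [mul_smul_comm, smul_mul_assoc, smul_smul, pow_succ' M, pow_succ Mᵀ, pow_succ' γ]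
  rw [mul_comm γ (γ ^ t)]
  congr 1
  simp [mul_assoc]

private lemma gg_succ' (γ : ℝ) (M Y : Matrix (Fin d) (Fin d) ℝ) (t : ℕ) :
    gg γ M (γ • (M * Y * Mᵀ)) t = gg γ M Y (t + 1) := by
  unfold gg
  rw [mul_smul_comm, smul_mul_assoc, smul_smul, pow_succ M, pow_succ' Mᵀ, pow_succ' γ]
  rw [mul_comm (γ ^ t) γ]
  congr 1
  simp [mul_assoc]

private lemma gg_norm {γ : ℝ} (hγ : 0 ≤ γ) (M Y : Matrix (Fin d) (Fin d) ℝ) (t : ℕ) :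
    ‖gg γ M Y t‖ ≤ (γ * ‖M‖ ^ 2) ^ t * ‖Y‖ := by
  induction t with
  | zero => simp [gg_zero]
  | succ n ih =>
      rw [gg_succ]
      have h1 : ‖γ • (M * gg γ M Y n * Mᵀ)‖ = γ * ‖M * gg γ M Y n * Mᵀ‖ := by
        rw [norm_smul, Real.norm_eq_abs, abs_of_nonneg hγ]
      have h2 : ‖M * gg γ M Y n * Mᵀ‖ ≤ ‖M‖ * ‖gg γ M Y n‖ * ‖M‖ := by
        calc ‖M * gg γ M Y n * Mᵀ‖ ≤ ‖M * gg γ M Y n‖ * ‖Mᵀ‖ := norm_mul_le _ _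
          _ ≤ ‖M‖ * ‖gg γ M Y n‖ * ‖Mᵀ‖ :=
              mul_le_mul_of_nonneg_right (norm_mul_le _ _) (norm_nonneg _)
          _ = ‖M‖ * ‖gg γ M Y n‖ * ‖M‖ := by rw [norm_tr]
      rw [h1]
      have hM : (0:ℝ) ≤ ‖M‖ := norm_nonneg _
      have hg : (0:ℝ) ≤ ‖gg γ M Y n‖ := norm_nonneg _
      have hY : (0:ℝ) ≤ ‖Y‖ := norm_nonneg _
      have hrpos : (0:ℝ) ≤ (γ * ‖M‖ ^ 2) ^ n := by positivity
      calc γ * ‖M * gg γ M Y n * Mᵀ‖ ≤ γ * (‖M‖ * ‖gg γ M Y n‖ * ‖M‖) := by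
            exact mul_le_mul_of_nonneg_left h2 hγ
        _ ≤ γ * (‖M‖ * ((γ * ‖M‖ ^ 2) ^ n * ‖Y‖) * ‖M‖) := by
            have := mul_le_mul_of_nonneg_left ih hM
            have := mul_le_mul_of_nonneg_right this hM
            exact mul_le_mul_of_nonneg_left (by nlinarith) hγ
        _ = (γ * ‖M‖ ^ 2) ^ (n + 1) * ‖Y‖ := by ring

private lemma gg_summable {γ : ℝ} (hγ : 0 ≤ γ) {M : Matrix (Fin d) (Fin d) ℝ}
    (hr : γ * ‖M‖ ^ 2 < 1) (Y : Matrix (Fin d) (Fin d) ℝ) :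
    Summable (gg γ M Y) := by
  have hr0 : (0:ℝ) ≤ γ * ‖M‖ ^ 2 := by positivity
  exact Summable.of_norm_bounded ((summable_geometric_of_lt_one hr0 hr).mul_right ‖Y‖)
    (gg_norm hγ M Y)

private lemma tsum_gg_norm {γ : ℝ} (hγ : 0 ≤ γ) {M : Matrix (Fin d) (Fin d) ℝ}
    (hr : γ * ‖M‖ ^ 2 < 1) (Y : Matrix (Fin d) (Fin d) ℝ) :
    ‖∑' t, gg γ M Y t‖ ≤ (1 - γ * ‖M‖ ^ 2)⁻¹ * ‖Y‖ := by
  have hr0 : (0:ℝ) ≤ γ * ‖M‖ ^ 2 := by positivity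
  have hs : Summable fun t => (γ * ‖M‖ ^ 2) ^ t * ‖Y‖ :=
    (summable_geometric_of_lt_one hr0 hr).mul_right ‖Y‖
  have h1 : Summable fun t => ‖gg γ M Y t‖ :=
    Summable.of_nonneg_of_le (fun t => norm_nonneg _) (gg_norm hγ M Y) hs
  calc ‖∑' t, gg γ M Y t‖ ≤ ∑' t, ‖gg γ M Y t‖ := norm_tsum_le_tsum_norm h1
    _ ≤ ∑' t, (γ * ‖M‖ ^ 2) ^ t * ‖Y‖ := Summable.tsum_le_tsum (gg_norm hγ M Y) h1 hs
    _ = (1 - γ * ‖M‖ ^ 2)⁻¹ * ‖Y‖ := by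
        rw [tsum_mul_right, tsum_geometric_of_lt_one hr0 hr]

/-- The fixed point equation `D = W + F D` forces `D = T W`. -/
private lemma key {γ : ℝ} (hγ : 0 ≤ γ) {M : Matrix (Fin d) (Fin d) ℝ}
    (hr : γ * ‖M‖ ^ 2 < 1) (W D : Matrix (Fin d) (Fin d) ℝ)
    (hD : D = W + γ • (M * D * Mᵀ)) :
    D = ∑' t, gg γ M W t := by
  have hstep : ∀ n, gg γ M D n = gg γ M W n + gg γ M D (n + 1) := by
    intro n
    calc gg γ M D n = gg γ M (W + γ • (M * D * Mᵀ)) n := by rw [← hD]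
      _ = gg γ M W n + gg γ M (γ • (M * D * Mᵀ)) n := by
          simp [gg, Matrix.mul_add, Matrix.add_mul, smul_add]
      _ = gg γ M W n + gg γ M D (n + 1) := by rw [gg_succ']
  have hpart : ∀ n, ∑ t ∈ Finset.range n, gg γ M W t = D - gg γ M D n := by
    intro n
    induction n with
    | zero => simp [gg_zero]
    | succ n ih =>
        rw [Finset.sum_range_succ, ih]
        have := hstep n
        abel_nf
        rw [this]
        abel
  have hr0 : (0:ℝ) ≤ γ * ‖M‖ ^ 2 := by positivity
  have hrem : Filter.Tendsto (fun n => gg γ M D n) Filter.atTop (nhds 0) := by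
    have hb : Filter.Tendsto (fun n => (γ * ‖M‖ ^ 2) ^ n * ‖D‖) Filter.atTop (nhds 0) := by
      simpa using (tendsto_pow_atTop_nhds_zero_of_lt_one hr0 hr).mul_const ‖D‖
    rw [tendsto_zero_iff_norm_tendsto_zero]
    exact squeeze_zero (fun n => norm_nonneg _) (gg_norm hγ M D) hb
  have h1 : Filter.Tendsto (fun n => ∑ t ∈ Finset.range n, gg γ M W t)
      Filter.atTop (nhds D) := by
    have : Filter.Tendsto (fun n => D - gg γ M D n) Filter.atTop (nhds (D - 0)) :=
      tendsto_const_nhds.sub hrem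
    simpa [hpart] using this
  have h2 := (gg_summable hγ hr W).hasSum.tendsto_sum_nat
  exact tendsto_nhds_unique h1 h2

private lemma opN_nonneg (f : Matrix (Fin d) (Fin d) ℝ → Matrix (Fin d) (Fin d) ℝ)
    {C : ℝ} (hC : 0 ≤ C) (hb : ∀ X, ‖f X‖ ≤ C * ‖X‖) : 0 ≤ opN f := by
  have hbdd : BddAbove (Set.range fun X : {X : Matrix (Fin d) (Fin d) ℝ // ‖X‖ ≤ 1} =>
      ‖f X.1‖) := by
    refine ⟨C, ?_⟩
    rintro x ⟨X, rfl⟩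
    calc ‖f X.1‖ ≤ C * ‖X.1‖ := hb X.1
      _ ≤ C * 1 := by exact mul_le_mul_of_nonneg_left X.2 hC
      _ = C := mul_one C
  have h0 : ‖f (0 : Matrix (Fin d) (Fin d) ℝ)‖ ≤ opN f :=
    le_ciSup hbdd (⟨0, by simp⟩ : {X : Matrix (Fin d) (Fin d) ℝ // ‖X‖ ≤ 1})
  exact le_trans (norm_nonneg _) h0

private lemma opN_bound (f : Matrix (Fin d) (Fin d) ℝ → Matrix (Fin d) (Fin d) ℝ)
    (hhom : ∀ (c : ℝ) X, f (c • X) = c • f X)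
    {C : ℝ} (hC : 0 ≤ C) (hb : ∀ X, ‖f X‖ ≤ C * ‖X‖) :
    ∀ X, ‖f X‖ ≤ opN f * ‖X‖ := by
  have hbdd : BddAbove (Set.range fun X : {X : Matrix (Fin d) (Fin d) ℝ // ‖X‖ ≤ 1} =>
      ‖f X.1‖) := by
    refine ⟨C, ?_⟩
    rintro x ⟨X, rfl⟩
    calc ‖f X.1‖ ≤ C * ‖X.1‖ := hb X.1
      _ ≤ C * 1 := by exact mul_le_mul_of_nonneg_left X.2 hC
      _ = C := mul_one C
  intro X
  rcases eq_or_ne X 0 with rfl | hX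
  · have : f (0 : Matrix (Fin d) (Fin d) ℝ) = 0 := by
      have := hhom 0 0
      simpa using this
    simp [this]
  · have hXpos : 0 < ‖X‖ := norm_pos_iff.mpr hX
    set Z : Matrix (Fin d) (Fin d) ℝ := ‖X‖⁻¹ • X with hZ
    have hZnorm : ‖Z‖ = 1 := by
      rw [hZ, norm_smul, Real.norm_eq_abs, abs_of_nonneg (by positivity),
        inv_mul_cancel₀ hXpos.ne']
    have hle : ‖f Z‖ ≤ opN f :=
      le_ciSup hbdd (⟨Z, le_of_eq hZnorm⟩ : {X : Matrix (Fin d) (Fin d) ℝ // ‖X‖ ≤ 1})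
    have hfZ : ‖f Z‖ = ‖X‖⁻¹ * ‖f X‖ := by
      rw [hZ, hhom, norm_smul, Real.norm_eq_abs, abs_of_nonneg (by positivity)]
    rw [hfZ] at hle
    calc ‖f X‖ = ‖X‖ * (‖X‖⁻¹ * ‖f X‖) := by field_simp
      _ ≤ ‖X‖ * opN f := mul_le_mul_of_nonneg_left hle hXpos.le
      _ = opN f * ‖X‖ := mul_comm _ _

private lemma opN_le (f : Matrix (Fin d) (Fin d) ℝ → Matrix (Fin d) (Fin d) ℝ)
    {C : ℝ} (h : ∀ X, ‖X‖ ≤ 1 → ‖f X‖ ≤ C) : opN f ≤ C := by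
  have : Nonempty {X : Matrix (Fin d) (Fin d) ℝ // ‖X‖ ≤ 1} := ⟨⟨0, by simp⟩⟩
  exact ciSup_le fun X => h X.1 X.2


private lemma gg_smul (γ : ℝ) (M : Matrix (Fin d) (Fin d) ℝ) (c : ℝ)
    (Y : Matrix (Fin d) (Fin d) ℝ) (t : ℕ) :
    gg γ M (c • Y) t = c • gg γ M Y t := by
  unfold gg
  rw [mul_smul_comm, smul_mul_assoc, smul_comm]

private lemma T_hom {γ : ℝ} (hγ : 0 ≤ γ) {M : Matrix (Fin d) (Fin d) ℝ}
    (hr : γ * ‖M‖ ^ 2 < 1) (c : ℝ) (Y : Matrix (Fin d) (Fin d) ℝ) :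
    (∑' t, gg γ M (c • Y) t) = c • ∑' t, gg γ M Y t := by
  simp_rw [gg_smul]
  exact Summable.tsum_const_smul c (gg_summable hγ hr Y)

private lemma T_rec {γ : ℝ} (hγ : 0 ≤ γ) {M : Matrix (Fin d) (Fin d) ℝ}
    (hr : γ * ‖M‖ ^ 2 < 1) (Y : Matrix (Fin d) (Fin d) ℝ) :
    (∑' t, gg γ M Y t) = Y + γ • (M * (∑' t, gg γ M Y t) * Mᵀ) := by
  have hs := gg_summable hγ hr Y
  have hs2 : Summable fun t => M * (gg γ M Y t * Mᵀ) :=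
    ((hs.mul_right Mᵀ).mul_left M)
  have htail : (∑' t, gg γ M Y (t + 1)) = γ • (M * (∑' t, gg γ M Y t) * Mᵀ) :=
    calc (∑' t, gg γ M Y (t + 1)) = ∑' t, γ • (M * gg γ M Y t * Mᵀ) :=
          tsum_congr fun t => gg_succ γ M Y t
      _ = γ • ∑' t, M * gg γ M Y t * Mᵀ := by
          apply Summable.tsum_const_smul
          simpa [mul_assoc] using hs2
      _ = γ • (M * (∑' t, gg γ M Y t) * Mᵀ) := by
          congr 1
          simp_rw [mul_assoc]
          rw [Summable.tsum_mul_left M (hs.mul_right Mᵀ),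
            Summable.tsum_mul_right Mᵀ hs]
  conv_lhs => rw [Summable.tsum_eq_zero_add hs]
  rw [gg_zero, htail]

end aux

/-- with `F^y_K(X) = γ(A-BK)X(A-BK)ᵀ` and
`T^y_K(X) = ∑ γ^t (A-BK)^t X ((A-BK)ᵀ)^t`, if
`‖T^y_K‖·‖F^y_K - F^y_{K'}‖ ≤ η < 1` then for every psd matrix `X`,
`‖(T^y_K - T^y_{K'})(X)‖ ≤ (1/(1-η))‖T^y_K‖‖F^y_K - F^y_{K'}‖‖T^y_K(X)‖
  ≤ (η/(1-η))‖T^y_K(X)‖`. -/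
theorem stmt_9 {d l : ℕ} (γ : ℝ) (hγ : γ ∈ Set.Ioo (0:ℝ) 1)
    (A : Matrix (Fin d) (Fin d) ℝ) (B : Matrix (Fin d) (Fin l) ℝ)
    (K K' : Matrix (Fin l) (Fin d) ℝ)
    (hK : γ * ‖A - B * K‖ ^ 2 < 1) (hK' : γ * ‖A - B * K'‖ ^ 2 < 1)
    (TK TK' FK FK' : Matrix (Fin d) (Fin d) ℝ → Matrix (Fin d) (Fin d) ℝ)
    (hFK : ∀ X, FK X = γ • ((A - B * K) * X * (A - B * K)ᵀ))
    (hFK' : ∀ X, FK' X = γ • ((A - B * K') * X * (A - B * K')ᵀ))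
    (hTK : ∀ X, TK X =
      ∑' t : ℕ, γ ^ t • ((A - B * K) ^ t * X * ((A - B * K)ᵀ) ^ t))
    (hTK' : ∀ X, TK' X =
      ∑' t : ℕ, γ ^ t • ((A - B * K') ^ t * X * ((A - B * K')ᵀ) ^ t))
    (η : ℝ) (hη1 : η < 1)
    (hη : opN TK * opN (fun X => FK X - FK' X) ≤ η) :
    ∀ X : Matrix (Fin d) (Fin d) ℝ, X.PosSemidef →
      ‖TK X - TK' X‖
          ≤ (1 / (1 - η)) * opN TK * opN (fun X => FK X - FK' X) * ‖TK X‖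
        ∧ (1 / (1 - η)) * opN TK * opN (fun X => FK X - FK' X) * ‖TK X‖
          ≤ (η / (1 - η)) * ‖TK X‖ := by
  obtain ⟨hγ0, hγ1⟩ := hγ
  have hγ0' : (0:ℝ) ≤ γ := hγ0.le
  set L := A - B * K with hLdef
  set L' := A - B * K' with hL'def
  have hTKg : ∀ Y, TK Y = ∑' t, gg γ L Y t := hTK
  have hTK'g : ∀ Y, TK' Y = ∑' t, gg γ L' Y t := hTK'
  have h1r : 0 < 1 - γ * ‖L‖ ^ 2 := by linarith
  have h1r' : 0 < 1 - γ * ‖L'‖ ^ 2 := by linarith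
  -- recurrences
  have hrecK : ∀ Y, TK Y = Y + γ • (L * TK Y * Lᵀ) := by
    intro Y; rw [hTKg Y]; exact T_rec hγ0' hK Y
  have hrecK' : ∀ Y, TK' Y = Y + γ • (L' * TK' Y * L'ᵀ) := by
    intro Y; rw [hTK'g Y]; exact T_rec hγ0' hK' Y
  -- homogeneity
  have hTKhom : ∀ (c : ℝ) Y, TK (c • Y) = c • TK Y := by
    intro c Y; rw [hTKg, hTKg]; exact T_hom hγ0' hK c Y
  have hTK'hom : ∀ (c : ℝ) Y, TK' (c • Y) = c • TK' Y := by
    intro c Y; rw [hTK'g, hTK'g]; exact T_hom hγ0' hK' c Y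
  have hΔhom : ∀ (c : ℝ) Y, (fun X => FK X - FK' X) (c • Y)
      = c • (fun X => FK X - FK' X) Y := by
    intro c Y
    simp only [hFK, hFK', mul_smul_comm, smul_mul_assoc, smul_sub, smul_comm γ c]
  -- norm bounds
  have hTKb : ∀ Y, ‖TK Y‖ ≤ (1 - γ * ‖L‖ ^ 2)⁻¹ * ‖Y‖ := by
    intro Y; rw [hTKg Y]; exact tsum_gg_norm hγ0' hK Y
  have hTK'b : ∀ Y, ‖TK' Y‖ ≤ (1 - γ * ‖L'‖ ^ 2)⁻¹ * ‖Y‖ := by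
    intro Y; rw [hTK'g Y]; exact tsum_gg_norm hγ0' hK' Y
  have hF1 : ∀ (N : Matrix (Fin d) (Fin d) ℝ) Y,
      ‖γ • (N * Y * Nᵀ)‖ ≤ (γ * ‖N‖ ^ 2) * ‖Y‖ := by
    intro N Y
    have := gg_norm hγ0' N Y 1
    simpa [gg] using this
  have hΔb : ∀ Y, ‖FK Y - FK' Y‖ ≤ (γ * ‖L‖ ^ 2 + γ * ‖L'‖ ^ 2) * ‖Y‖ := by
    intro Y
    calc ‖FK Y - FK' Y‖ ≤ ‖FK Y‖ + ‖FK' Y‖ := norm_sub_le _ _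
      _ ≤ (γ * ‖L‖ ^ 2) * ‖Y‖ + (γ * ‖L'‖ ^ 2) * ‖Y‖ := by
          rw [hFK, hFK']; exact add_le_add (hF1 L Y) (hF1 L' Y)
      _ = (γ * ‖L‖ ^ 2 + γ * ‖L'‖ ^ 2) * ‖Y‖ := by ring
  have hCnn : (0:ℝ) ≤ (1 - γ * ‖L‖ ^ 2)⁻¹ := by positivity
  have hC'nn : (0:ℝ) ≤ (1 - γ * ‖L'‖ ^ 2)⁻¹ := by positivity
  have hCFnn : (0:ℝ) ≤ γ * ‖L‖ ^ 2 + γ * ‖L'‖ ^ 2 := by positivity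
  have ha : (0:ℝ) ≤ opN TK := opN_nonneg TK hCnn hTKb
  have hb : (0:ℝ) ≤ opN (fun X => FK X - FK' X) :=
    opN_nonneg _ hCFnn hΔb
  have hTKop : ∀ Y, ‖TK Y‖ ≤ opN TK * ‖Y‖ := opN_bound TK hTKhom hCnn hTKb
  have hTK'op : ∀ Y, ‖TK' Y‖ ≤ opN TK' * ‖Y‖ := opN_bound TK' hTK'hom hC'nn hTK'b
  have hΔop : ∀ Y, ‖FK Y - FK' Y‖ ≤ opN (fun X => FK X - FK' X) * ‖Y‖ :=
    opN_bound _ hΔhom hCFnn hΔb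
  have h1η : (0:ℝ) < 1 - η := by linarith
  -- the generic fixed point equation
  have main : ∀ (T1 T2 : Matrix (Fin d) (Fin d) ℝ → Matrix (Fin d) (Fin d) ℝ)
      (N1 N2 : Matrix (Fin d) (Fin d) ℝ),
      (∀ Y, T1 Y = Y + γ • (N1 * T1 Y * N1ᵀ)) →
      (∀ Y, T2 Y = Y + γ • (N2 * T2 Y * N2ᵀ)) →
      ∀ Z, T1 Z - T2 Z = (γ • (N1 * T1 Z * N1ᵀ) - γ • (N2 * T1 Z * N2ᵀ))
            + γ • (N2 * (T1 Z - T2 Z) * N2ᵀ) := by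
    intro T1 T2 N1 N2 h1 h2 Z
    have e1 : Z = T1 Z - γ • (N1 * T1 Z * N1ᵀ) := eq_sub_of_add_eq (h1 Z).symm
    have e2 : Z = T2 Z - γ • (N2 * T2 Z * N2ᵀ) := eq_sub_of_add_eq (h2 Z).symm
    have e2' := e1.symm.trans e2
    have hsub : γ • (N2 * (T1 Z - T2 Z) * N2ᵀ)
        = γ • (N2 * T1 Z * N2ᵀ) - γ • (N2 * T2 Z * N2ᵀ) := by
      rw [Matrix.mul_sub, Matrix.sub_mul, smul_sub]
    rw [hsub]
    have h3 : T1 Z - T2 Z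
        = γ • (N1 * T1 Z * N1ᵀ) - γ • (N2 * T2 Z * N2ᵀ) :=
      sub_eq_sub_iff_sub_eq_sub.mpr e2'
    rw [h3]; abel
  -- bound opN TK' ≤ opN TK / (1 - η)
  have hT'le : opN TK' ≤ opN TK / (1 - η) := by
    apply opN_le
    intro Z hZ
    have hfix := main TK' TK L' L hrecK' hrecK Z
    have hkey := key hγ0' hK
      (γ • (L' * TK' Z * L'ᵀ) - γ • (L * TK' Z * Lᵀ)) (TK' Z - TK Z) hfix
    have hWid : (γ • (L' * TK' Z * L'ᵀ) - γ • (L * TK' Z * Lᵀ))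
        = FK' (TK' Z) - FK (TK' Z) := by rw [hFK, hFK']
    rw [hWid, ← hTKg] at hkey
    have hu : (0:ℝ) ≤ ‖TK' Z‖ := norm_nonneg _
    have hW'b : ‖FK' (TK' Z) - FK (TK' Z)‖
        ≤ opN (fun X => FK X - FK' X) * ‖TK' Z‖ := by
      rw [norm_sub_rev]; exact hΔop (TK' Z)
    have step : ‖TK' Z‖ ≤ opN TK * ‖Z‖
        + opN TK * (opN (fun X => FK X - FK' X) * ‖TK' Z‖) := by
      calc ‖TK' Z‖ = ‖TK Z + (TK' Z - TK Z)‖ := by congr 1; abel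
        _ ≤ ‖TK Z‖ + ‖TK' Z - TK Z‖ := norm_add_le _ _
        _ ≤ opN TK * ‖Z‖ + opN TK * ‖FK' (TK' Z) - FK (TK' Z)‖ := by
            refine add_le_add (hTKop Z) ?_
            rw [hkey]; exact hTKop _
        _ ≤ opN TK * ‖Z‖
            + opN TK * (opN (fun X => FK X - FK' X) * ‖TK' Z‖) := by
            exact add_le_add_right (mul_le_mul_of_nonneg_left hW'b ha) _
    rw [le_div_iff₀ h1η]
    nlinarith [mul_le_mul_of_nonneg_left hZ ha,
      mul_le_mul_of_nonneg_right hη hu]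
  -- main estimate
  intro X _hX
  have hfix := main TK TK' L L' hrecK hrecK' X
  have hkey := key hγ0' hK'
    (γ • (L * TK X * Lᵀ) - γ • (L' * TK X * L'ᵀ)) (TK X - TK' X) hfix
  have hWid : (γ • (L * TK X * Lᵀ) - γ • (L' * TK X * L'ᵀ))
      = FK (TK X) - FK' (TK X) := by rw [hFK, hFK']
  rw [hWid, ← hTK'g] at hkey
  constructor
  · calc ‖TK X - TK' X‖ = ‖TK' (FK (TK X) - FK' (TK X))‖ := by rw [hkey]
      _ ≤ opN TK' * ‖FK (TK X) - FK' (TK X)‖ := hTK'op _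
      _ ≤ (opN TK / (1 - η)) * (opN (fun X => FK X - FK' X) * ‖TK X‖) :=
          mul_le_mul hT'le (hΔop (TK X)) (norm_nonneg _) (by positivity)
      _ = (1 / (1 - η)) * opN TK * opN (fun X => FK X - FK' X) * ‖TK X‖ := by
          ring
  · have hinv : (0:ℝ) ≤ 1 / (1 - η) := by positivity
    calc (1 / (1 - η)) * opN TK * opN (fun X => FK X - FK' X) * ‖TK X‖
        = (1 / (1 - η)) * (opN TK * opN (fun X => FK X - FK' X) * ‖TK X‖) := by
          ring
      _ ≤ (1 / (1 - η)) * (η * ‖TK X‖) :=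
          mul_le_mul_of_nonneg_left
            (mul_le_mul_of_nonneg_right hη (norm_nonneg _)) hinv
      _ = (η / (1 - η)) * ‖TK X‖ := by ring
end

section
/- For any matrix X with ‖X‖ = 1 and any positive definite matrix Σ, one has ‖T^y_K(X)‖ ≤ ‖Σ^{-1/2} X Σ^{-1/2}‖ · ‖T^y_K(Σ)‖. -/
open scoped Matrix.Norms.L2Operator
open Matrix

namespace Stmt10Aux

variable {d : ℕ}

noncomputable def e (u : Fin d → ℝ) : EuclideanSpace ℝ (Fin d) :=
  (EuclideanSpace.equiv (Fin d) ℝ).symm u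

lemma inner_e (u v : Fin d → ℝ) : (inner ℝ (e u) (e v) : ℝ) = u ⬝ᵥ v := by
  simp [e, PiLp.inner_apply, dotProduct, RCLike.inner_apply, mul_comm]

lemma dot_self_eq (u : Fin d → ℝ) : u ⬝ᵥ u = ‖e u‖ ^ 2 := by
  rw [← inner_e, real_inner_self_eq_norm_sq]

lemma e_smul (c : ℝ) (u : Fin d → ℝ) : e (c • u) = c • e u := rfl

lemma abs_dot_mulVec_le (W : Matrix (Fin d) (Fin d) ℝ) (u v : Fin d → ℝ) :
    |u ⬝ᵥ W *ᵥ v| ≤ ‖W‖ * ‖e u‖ * ‖e v‖ := by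
  have h1 : u ⬝ᵥ W *ᵥ v = (inner ℝ (e u) (e (W *ᵥ v)) : ℝ) := (inner_e _ _).symm
  rw [h1]
  calc |(inner ℝ (e u) (e (W *ᵥ v)) : ℝ)| ≤ ‖e u‖ * ‖e (W *ᵥ v)‖ :=
        abs_real_inner_le_norm _ _
    _ ≤ ‖e u‖ * (‖W‖ * ‖e v‖) :=
        mul_le_mul_of_nonneg_left (Matrix.l2_opNorm_mulVec W (e v)) (norm_nonneg _)
    _ = ‖W‖ * ‖e u‖ * ‖e v‖ := by ring

lemma hasSum_dot {f : ℕ → Matrix (Fin d) (Fin d) ℝ} {T : Matrix (Fin d) (Fin d) ℝ}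
    (hf : HasSum f T) (u v : Fin d → ℝ) :
    HasSum (fun t => u ⬝ᵥ (f t) *ᵥ v) (u ⬝ᵥ T *ᵥ v) := by
  let L : Matrix (Fin d) (Fin d) ℝ →ₗ[ℝ] ℝ :=
    { toFun := fun W => u ⬝ᵥ W *ᵥ v
      map_add' := fun W₁ W₂ => by simp [Matrix.add_mulVec, dotProduct_add]
      map_smul' := fun c W => by
        simp [Matrix.smul_mulVec, dotProduct_smul] }
  exact (LinearMap.toContinuousLinearMap L).hasSum hf

end Stmt10Aux

set_option maxHeartbeats 2000000 in
open Stmt10Aux in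
/-- for `T^y_K(X) = ∑ γ^t (A-BK)^t X ((A-BK)ᵀ)^t` (admissible `K`),
any matrix `X` with `‖X‖ = 1` and any positive definite `Σ` (with square root
`S`, `S * S = Σ`): `‖T^y_K(X)‖ ≤ ‖Σ^{-1/2} X Σ^{-1/2}‖ ‖T^y_K(Σ)‖`. -/
theorem stmt_10 {d l : ℕ} (γ : ℝ) (hγ : γ ∈ Set.Ioo (0:ℝ) 1)
    (A : Matrix (Fin d) (Fin d) ℝ) (B : Matrix (Fin d) (Fin l) ℝ)
    (K : Matrix (Fin l) (Fin d) ℝ)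
    (hK : γ * ‖A - B * K‖ ^ 2 < 1)
    (Sig S : Matrix (Fin d) (Fin d) ℝ)
    (hSig : Sig.PosDef) (hS : S.PosDef) (hSsq : S * S = Sig) :
    ∀ X : Matrix (Fin d) (Fin d) ℝ, ‖X‖ = 1 →
      ‖∑' t : ℕ, γ ^ t • ((A - B * K) ^ t * X * ((A - B * K)ᵀ) ^ t)‖
        ≤ ‖S⁻¹ * X * S⁻¹‖ *
          ‖∑' t : ℕ, γ ^ t • ((A - B * K) ^ t * Sig * ((A - B * K)ᵀ) ^ t)‖ := by
  intro X hX
  obtain ⟨hγ0, hγ1⟩ := hγ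
  set M := A - B * K with hMdef
  set Y := S⁻¹ * X * S⁻¹ with hYdef
  have hSdet : IsUnit S.det := isUnit_iff_ne_zero.mpr (ne_of_gt hS.det_pos)
  have hSsymm : Sᵀ = S := by
    rw [← Matrix.conjTranspose_eq_transpose_of_trivial]; exact hS.isHermitian
  have hXeq : S * Y * S = X := by
    rw [hYdef, show S * (S⁻¹ * X * S⁻¹) * S = S * S⁻¹ * X * (S⁻¹ * S) by
      simp only [Matrix.mul_assoc], Matrix.mul_nonsing_inv S hSdet,
      Matrix.nonsing_inv_mul S hSdet, Matrix.one_mul, Matrix.mul_one]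
  set r := γ * ‖M‖ ^ 2 with hrdef
  have hr0 : 0 ≤ r := mul_nonneg hγ0.le (sq_nonneg _)
  have hbound : ∀ (W : Matrix (Fin d) (Fin d) ℝ) (t : ℕ),
      ‖γ ^ t • (M ^ t * W * (Mᵀ) ^ t)‖ ≤ ‖W‖ * r ^ t := by
    intro W t
    cases t with
    | zero => simp
    | succ n =>
      have h1 : ‖M ^ (n+1)‖ ≤ ‖M‖ ^ (n+1) := norm_pow_le' M (Nat.succ_pos n)
      have h2 : ‖(Mᵀ) ^ (n+1)‖ ≤ ‖M‖ ^ (n+1) := by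
        rw [← Matrix.transpose_pow, ← Matrix.conjTranspose_eq_transpose_of_trivial,
          Matrix.l2_opNorm_conjTranspose]
        exact h1
      have hγt : ‖γ ^ (n+1)‖ = γ ^ (n+1) := by
        rw [Real.norm_eq_abs, abs_of_nonneg (pow_nonneg hγ0.le _)]
      calc ‖γ ^ (n+1) • (M ^ (n+1) * W * (Mᵀ) ^ (n+1))‖
          = γ ^ (n+1) * ‖M ^ (n+1) * W * (Mᵀ) ^ (n+1)‖ := by rw [norm_smul, hγt]
        _ ≤ γ ^ (n+1) * ((‖M‖ ^ (n+1) * ‖W‖) * ‖M‖ ^ (n+1)) := by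
            refine mul_le_mul_of_nonneg_left ?_ (pow_nonneg hγ0.le _)
            refine le_trans (Matrix.l2_opNorm_mul _ _) ?_
            exact mul_le_mul
              (le_trans (Matrix.l2_opNorm_mul _ _)
                (mul_le_mul_of_nonneg_right h1 (norm_nonneg _)))
              h2 (norm_nonneg _) (by positivity)
        _ = ‖W‖ * r ^ (n+1) := by rw [hrdef]; ring
  have hgeo : Summable fun t : ℕ => r ^ t := summable_geometric_of_lt_one hr0 hK
  have hsumX : Summable (fun t : ℕ => γ ^ t • (M ^ t * X * (Mᵀ) ^ t)) :=
    Summable.of_norm_bounded (hgeo.mul_left ‖X‖) (hbound X)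
  have hsumS : Summable (fun t : ℕ => γ ^ t • (M ^ t * Sig * (Mᵀ) ^ t)) :=
    Summable.of_norm_bounded (hgeo.mul_left ‖Sig‖) (hbound Sig)
  obtain ⟨TX, hTXsum⟩ := hsumX
  obtain ⟨TS, hTSsum⟩ := hsumS
  rw [hTXsum.tsum_eq, hTSsum.tsum_eq]
  set Nt : ℕ → Matrix (Fin d) (Fin d) ℝ := fun t => S * (Mᵀ) ^ t with hNt
  have hA : ∀ t, (M ^ t * S)ᵀ = Nt t := fun t => by
    rw [Matrix.transpose_mul, Matrix.transpose_pow, hSsymm]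
  have hI1 : ∀ (t : ℕ) (u v : Fin d → ℝ),
      u ⬝ᵥ (γ ^ t • (M ^ t * X * (Mᵀ) ^ t)) *ᵥ v
        = γ ^ t * ((Nt t *ᵥ u) ⬝ᵥ Y *ᵥ (Nt t *ᵥ v)) := by
    intro t u v
    have hX' : M ^ t * X * (Mᵀ) ^ t = (M ^ t * S) * Y * Nt t := by
      rw [← hXeq]; simp only [hNt, Matrix.mul_assoc]
    rw [hX', Matrix.smul_mulVec, dotProduct_smul, smul_eq_mul]
    congr 1
    rw [← Matrix.mulVec_mulVec, ← Matrix.mulVec_mulVec, Matrix.dotProduct_mulVec,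
      ← Matrix.mulVec_transpose, hA]
  have hI2 : ∀ (t : ℕ) (u : Fin d → ℝ),
      u ⬝ᵥ (γ ^ t • (M ^ t * Sig * (Mᵀ) ^ t)) *ᵥ u
        = γ ^ t * ‖e (Nt t *ᵥ u)‖ ^ 2 := by
    intro t u
    have hS' : M ^ t * Sig * (Mᵀ) ^ t = (M ^ t * S) * Nt t := by
      rw [← hSsq]; simp only [hNt, Matrix.mul_assoc]
    rw [hS', Matrix.smul_mulVec, dotProduct_smul, smul_eq_mul,
      ← Matrix.mulVec_mulVec, Matrix.dotProduct_mulVec, ← Matrix.mulVec_transpose, hA,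
      dot_self_eq]
  have hTSnn : 0 ≤ ‖TS‖ := norm_nonneg _
  have hYnn : 0 ≤ ‖Y‖ := norm_nonneg _
  have key : ∀ u v : Fin d → ℝ, ‖e u‖ ≤ 1 → ‖e v‖ ≤ 1 →
      |u ⬝ᵥ TX *ᵥ v| ≤ ‖Y‖ * ‖TS‖ := by
    intro u v hu hv
    have hsX : HasSum (fun t => γ ^ t * ((Nt t *ᵥ u) ⬝ᵥ Y *ᵥ (Nt t *ᵥ v)))
        (u ⬝ᵥ TX *ᵥ v) := by
      have h0 := hasSum_dot hTXsum u v
      simp only [hI1] at h0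
      exact h0
    have hsU : HasSum (fun t => γ ^ t * ‖e (Nt t *ᵥ u)‖ ^ 2) (u ⬝ᵥ TS *ᵥ u) := by
      have h0 := hasSum_dot hTSsum u u
      simp only [hI2] at h0
      exact h0
    have hsV : HasSum (fun t => γ ^ t * ‖e (Nt t *ᵥ v)‖ ^ 2) (v ⬝ᵥ TS *ᵥ v) := by
      have h0 := hasSum_dot hTSsum v v
      simp only [hI2] at h0
      exact h0
    have hdU : u ⬝ᵥ TS *ᵥ u ≤ ‖TS‖ := by
      refine le_trans (le_abs_self _) (le_trans (abs_dot_mulVec_le TS u u) ?_)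
      nlinarith [mul_le_mul hu hu (norm_nonneg (e u)) zero_le_one, hTSnn,
        mul_le_mul_of_nonneg_left (mul_le_mul hu hu (norm_nonneg (e u)) zero_le_one) hTSnn,
        mul_assoc ‖TS‖ ‖e u‖ ‖e u‖]
    have hdV : v ⬝ᵥ TS *ᵥ v ≤ ‖TS‖ := by
      refine le_trans (le_abs_self _) (le_trans (abs_dot_mulVec_le TS v v) ?_)
      nlinarith [mul_le_mul hv hv (norm_nonneg (e v)) zero_le_one, hTSnn,
        mul_le_mul_of_nonneg_left (mul_le_mul hv hv (norm_nonneg (e v)) zero_le_one) hTSnn,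
        mul_assoc ‖TS‖ ‖e v‖ ‖e v‖]
    have hterm : ∀ t : ℕ, |γ ^ t * ((Nt t *ᵥ u) ⬝ᵥ Y *ᵥ (Nt t *ᵥ v))|
        ≤ ‖Y‖ / 2 * (γ ^ t * ‖e (Nt t *ᵥ u)‖ ^ 2 + γ ^ t * ‖e (Nt t *ᵥ v)‖ ^ 2) := by
      intro t
      have hγt : (0:ℝ) ≤ γ ^ t := pow_nonneg hγ0.le t
      have h1 : |(Nt t *ᵥ u) ⬝ᵥ Y *ᵥ (Nt t *ᵥ v)|
          ≤ ‖Y‖ * ‖e (Nt t *ᵥ u)‖ * ‖e (Nt t *ᵥ v)‖ := abs_dot_mulVec_le Y _ _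
      have h2 : ‖e (Nt t *ᵥ u)‖ * ‖e (Nt t *ᵥ v)‖
          ≤ (‖e (Nt t *ᵥ u)‖ ^ 2 + ‖e (Nt t *ᵥ v)‖ ^ 2) / 2 := by
        nlinarith [sq_nonneg (‖e (Nt t *ᵥ u)‖ - ‖e (Nt t *ᵥ v)‖)]
      rw [abs_mul, abs_of_nonneg hγt]
      calc γ ^ t * |(Nt t *ᵥ u) ⬝ᵥ Y *ᵥ (Nt t *ᵥ v)|
          ≤ γ ^ t * (‖Y‖ * ‖e (Nt t *ᵥ u)‖ * ‖e (Nt t *ᵥ v)‖) :=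
            mul_le_mul_of_nonneg_left h1 hγt
        _ ≤ γ ^ t * (‖Y‖ * ((‖e (Nt t *ᵥ u)‖ ^ 2 + ‖e (Nt t *ᵥ v)‖ ^ 2) / 2)) := by
            refine mul_le_mul_of_nonneg_left ?_ hγt
            rw [mul_assoc]
            exact mul_le_mul_of_nonneg_left h2 hYnn
        _ = ‖Y‖ / 2 * (γ ^ t * ‖e (Nt t *ᵥ u)‖ ^ 2 + γ ^ t * ‖e (Nt t *ᵥ v)‖ ^ 2) := by ring
    have hsum_bnd : Summable (fun t : ℕ =>
        ‖Y‖ / 2 * (γ ^ t * ‖e (Nt t *ᵥ u)‖ ^ 2 + γ ^ t * ‖e (Nt t *ᵥ v)‖ ^ 2)) :=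
      (hsU.summable.add hsV.summable).mul_left _
    have habs : Summable (fun t : ℕ =>
        |γ ^ t * ((Nt t *ᵥ u) ⬝ᵥ Y *ᵥ (Nt t *ᵥ v))|) := hsX.summable.abs
    calc |u ⬝ᵥ TX *ᵥ v| = |∑' t : ℕ, γ ^ t * ((Nt t *ᵥ u) ⬝ᵥ Y *ᵥ (Nt t *ᵥ v))| := by
          rw [hsX.tsum_eq]
      _ ≤ ∑' t : ℕ, |γ ^ t * ((Nt t *ᵥ u) ⬝ᵥ Y *ᵥ (Nt t *ᵥ v))| := by
          have h2 : Summable (fun t : ℕ =>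
              ‖γ ^ t * ((Nt t *ᵥ u) ⬝ᵥ Y *ᵥ (Nt t *ᵥ v))‖) := by
            simpa only [Real.norm_eq_abs] using habs
          simpa only [Real.norm_eq_abs] using norm_tsum_le_tsum_norm h2
      _ ≤ ∑' t : ℕ, ‖Y‖ / 2 * (γ ^ t * ‖e (Nt t *ᵥ u)‖ ^ 2 + γ ^ t * ‖e (Nt t *ᵥ v)‖ ^ 2) :=
          Summable.tsum_le_tsum hterm habs hsum_bnd
      _ = ‖Y‖ / 2 * ((u ⬝ᵥ TS *ᵥ u) + (v ⬝ᵥ TS *ᵥ v)) := by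
          rw [tsum_mul_left, (hsU.add hsV).tsum_eq]
      _ ≤ ‖Y‖ / 2 * (‖TS‖ + ‖TS‖) :=
          mul_le_mul_of_nonneg_left (add_le_add hdU hdV) (by positivity)
      _ = ‖Y‖ * ‖TS‖ := by ring
  have hcol : ∀ y : Fin d → ℝ, ‖e (TX *ᵥ y)‖ ≤ (‖Y‖ * ‖TS‖) * ‖e y‖ := by
    intro y
    rcases eq_or_ne y 0 with rfl | hy
    · simp only [Matrix.mulVec_zero]
      have : e (0 : Fin d → ℝ) = 0 := rfl
      rw [this, norm_zero]
      positivity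
    · have hny : 0 < ‖e y‖ := by
        rw [norm_pos_iff]
        intro h
        exact hy ((EuclideanSpace.equiv (Fin d) ℝ).symm.injective (by simpa [e] using h))
      set y' := (‖e y‖)⁻¹ • y with hy'
      have hy'n : ‖e y'‖ ≤ 1 := by
        rw [hy', e_smul, norm_smul, Real.norm_eq_abs,
          abs_of_nonneg (inv_nonneg.mpr hny.le), inv_mul_cancel₀ hny.ne']
      set w := TX *ᵥ y' with hw
      have hwle : ‖e w‖ ≤ ‖Y‖ * ‖TS‖ := by
        rcases eq_or_lt_of_le (norm_nonneg (e w)) with h0 | h0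
        · rw [← h0]; exact mul_nonneg hYnn hTSnn
        · have hu1 : ‖e ((‖e w‖)⁻¹ • w)‖ ≤ 1 := by
            rw [e_smul, norm_smul, Real.norm_eq_abs,
              abs_of_nonneg (inv_nonneg.mpr h0.le), inv_mul_cancel₀ h0.ne']
          have hk := key ((‖e w‖)⁻¹ • w) y' hu1 hy'n
          have hdot : ((‖e w‖)⁻¹ • w) ⬝ᵥ TX *ᵥ y' = ‖e w‖ := by
            rw [← hw, smul_dotProduct, smul_eq_mul, dot_self_eq, sq,
              ← mul_assoc, inv_mul_cancel₀ h0.ne', one_mul]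
          rw [hdot, abs_of_nonneg h0.le] at hk
          exact hk
      have hyy : y = ‖e y‖ • y' := by
        rw [hy', smul_smul, mul_inv_cancel₀ hny.ne', one_smul]
      calc ‖e (TX *ᵥ y)‖ = ‖e (TX *ᵥ (‖e y‖ • y'))‖ := by rw [← hyy]
        _ = ‖e y‖ * ‖e w‖ := by
            rw [Matrix.mulVec_smul, e_smul, norm_smul, Real.norm_eq_abs,
              abs_of_nonneg hny.le, hw]
        _ ≤ ‖e y‖ * (‖Y‖ * ‖TS‖) := mul_le_mul_of_nonneg_left hwle hny.le
        _ = (‖Y‖ * ‖TS‖) * ‖e y‖ := by ring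
  rw [Matrix.l2_opNorm_def]
  refine ContinuousLinearMap.opNorm_le_bound _ (mul_nonneg hYnn hTSnn) ?_
  intro x
  have h := hcol ((WithLp.equiv 2 (Fin d → ℝ)) x)
  simpa [e, Matrix.toEuclideanLin_apply] using h
end

section
/- The operator T^y_K satisfies the bound ‖T^y_K‖ ≤ C_y(K) / (λ¹_y λ_min(Q)), where λ¹_y = λ_min(Σ_{y_0} + (γ/(1-γ))Σ¹) > 0. -/
open scoped Matrix.Norms.L2Operator
open Matrix

namespace S11

variable {d : ℕ}

lemma psd_quad {P : Matrix (Fin d) (Fin d) ℝ} (h : P.PosSemidef) (x : Fin d → ℝ) :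
    0 ≤ x ⬝ᵥ P *ᵥ x := by simpa using h.dotProduct_mulVec_nonneg x

lemma dot_nonneg (x : Fin d → ℝ) : 0 ≤ x ⬝ᵥ x :=
  Finset.sum_nonneg fun i _ => mul_self_nonneg _

lemma dot_pos {x : Fin d → ℝ} (hx : x ≠ 0) : 0 < x ⬝ᵥ x :=
  (dot_nonneg x).lt_of_ne (fun h => hx (dotProduct_self_eq_zero.mp h.symm))

lemma trace_psd_nonneg {P : Matrix (Fin d) (Fin d) ℝ} (h : P.PosSemidef) : 0 ≤ P.trace := by
  refine Finset.sum_nonneg fun i _ => ?_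
  have := psd_quad h (Pi.single i 1)
  simpa [dotProduct, mulVec, Pi.single_apply, Finset.mul_sum, mul_ite] using this

lemma herm_eq_transpose {m n : ℕ} (P : Matrix (Fin m) (Fin n) ℝ) : Pᴴ = Pᵀ := by
  ext i j; simp [conjTranspose_apply]

lemma trans_eq_of_herm {d : ℕ} {P : Matrix (Fin d) (Fin d) ℝ} (h : P.IsHermitian) : Pᵀ = P := by
  rw [← herm_eq_transpose]; exact h

open scoped MatrixOrder in
lemma trace_mul_psd_nonneg {P Y : Matrix (Fin d) (Fin d) ℝ}
    (hP : P.PosSemidef) (hY : Y.PosSemidef) : 0 ≤ (P * Y).trace := by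
  have hs : (CFC.sqrt Y).PosSemidef := (CFC.sqrt_nonneg Y).posSemidef
  have h1 : P * Y = P * CFC.sqrt Y * CFC.sqrt Y := by
    rw [mul_assoc, CFC.sqrt_mul_sqrt_self Y hY.nonneg]
  have h2 : (P * CFC.sqrt Y * CFC.sqrt Y).trace = (CFC.sqrt Y * P * CFC.sqrt Y).trace := by
    rw [trace_mul_cycle]
  have h3 : (CFC.sqrt Y * P * CFC.sqrt Y).PosSemidef := by
    have := hP.conjTranspose_mul_mul_same (CFC.sqrt Y)
    rwa [hs.1] at this
  rw [h1, h2]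
  exact trace_psd_nonneg h3

lemma lamMin_bddBelow {P : Matrix (Fin d) (Fin d) ℝ} (hP : P.PosSemidef) :
    BddBelow (Set.range fun y : {x : Fin d → ℝ // x ≠ 0} =>
      (y.1 ⬝ᵥ P *ᵥ y.1) / (y.1 ⬝ᵥ y.1)) := by
  refine ⟨0, ?_⟩
  rintro _ ⟨y, rfl⟩
  exact div_nonneg (psd_quad hP y.1) (dot_nonneg y.1)

lemma lamMin_mul_le {P : Matrix (Fin d) (Fin d) ℝ} (hP : P.PosSemidef) (x : Fin d → ℝ) :
    lamMin P * (x ⬝ᵥ x) ≤ x ⬝ᵥ P *ᵥ x := by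
  rcases eq_or_ne x 0 with rfl | hx
  · simp
  · have hxx := dot_pos hx
    have h := ciInf_le (lamMin_bddBelow hP) (⟨x, hx⟩ : {x : Fin d → ℝ // x ≠ 0})
    rw [lamMin]
    calc (⨅ y : {x : Fin d → ℝ // x ≠ 0}, (y.1 ⬝ᵥ P *ᵥ y.1) / (y.1 ⬝ᵥ y.1)) * (x ⬝ᵥ x)
        ≤ ((x ⬝ᵥ P *ᵥ x) / (x ⬝ᵥ x)) * (x ⬝ᵥ x) := mul_le_mul_of_nonneg_right h hxx.le
      _ = x ⬝ᵥ P *ᵥ x := div_mul_cancel₀ _ hxx.ne'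

lemma pd_quad {P : Matrix (Fin d) (Fin d) ℝ} (h : P.PosDef) {x : Fin d → ℝ} (hx : x ≠ 0) :
    0 < x ⬝ᵥ P *ᵥ x := by simpa using h.dotProduct_mulVec_pos hx

lemma continuous_quad (P : Matrix (Fin d) (Fin d) ℝ) :
    Continuous fun x : Fin d → ℝ => x ⬝ᵥ P *ᵥ x := by
  unfold dotProduct mulVec
  exact continuous_finset_sum _ fun i _ => (continuous_apply i).mul
    (continuous_finset_sum _ fun j _ => continuous_const.mul (continuous_apply j))

lemma lamMin_pos {P : Matrix (Fin d) (Fin d) ℝ} (hP : P.PosDef)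
    (hne : Nonempty {x : Fin d → ℝ // x ≠ 0}) : 0 < lamMin P := by
  set s : Set (Fin d → ℝ) := {x | x ⬝ᵥ x = 1} with hs
  have hcont : Continuous fun x : Fin d → ℝ => x ⬝ᵥ x := by
    unfold dotProduct
    exact continuous_finset_sum _ fun i _ => (continuous_apply i).mul (continuous_apply i)
  have hclosed : IsClosed s := isClosed_eq hcont continuous_const
  have hbd : Bornology.IsBounded s := by
    refine (Metric.isBounded_iff_subset_closedBall 0).mpr ⟨1, fun x hx => ?_⟩
    have hx1 : x ⬝ᵥ x = 1 := hx
    simp only [Metric.mem_closedBall, dist_zero_right]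
    rw [pi_norm_le_iff_of_nonneg zero_le_one]
    intro i
    rw [Real.norm_eq_abs, abs_le_one_iff_mul_self_le_one]
    calc x i * x i ≤ x ⬝ᵥ x := Finset.single_le_sum (f := fun j => x j * x j)
          (fun j _ => mul_self_nonneg _) (Finset.mem_univ i)
      _ = 1 := hx1
  have hcomp : IsCompact s := Metric.isCompact_of_isClosed_isBounded hclosed hbd
  have hsne : s.Nonempty := by
    obtain ⟨⟨x, hx⟩⟩ := hne
    have hxx := dot_pos hx
    refine ⟨(Real.sqrt (x ⬝ᵥ x))⁻¹ • x, ?_⟩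
    have hsq : Real.sqrt (x ⬝ᵥ x) * Real.sqrt (x ⬝ᵥ x) = x ⬝ᵥ x := Real.mul_self_sqrt hxx.le
    have hsqpos : 0 < Real.sqrt (x ⬝ᵥ x) := Real.sqrt_pos.mpr hxx
    show ((Real.sqrt (x ⬝ᵥ x))⁻¹ • x) ⬝ᵥ ((Real.sqrt (x ⬝ᵥ x))⁻¹ • x) = 1
    rw [smul_dotProduct, dotProduct_smul, smul_eq_mul, smul_eq_mul]
    field_simp
    rw [Real.sq_sqrt hxx.le]
  obtain ⟨x0, hx0s, hmin⟩ := hcomp.exists_isMinOn hsne (continuous_quad P).continuousOn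
  have hx0ne : x0 ≠ 0 := by
    intro h; rw [hs] at hx0s; simp [h] at hx0s
  have hm : 0 < x0 ⬝ᵥ P *ᵥ x0 := pd_quad hP hx0ne
  have hlow : x0 ⬝ᵥ P *ᵥ x0 ≤ lamMin P := by
    rw [lamMin]
    refine le_ciInf fun y => ?_
    obtain ⟨x, hx⟩ := y
    have hxx := dot_pos hx
    have hsqpos : 0 < Real.sqrt (x ⬝ᵥ x) := Real.sqrt_pos.mpr hxx
    have hsq : Real.sqrt (x ⬝ᵥ x) * Real.sqrt (x ⬝ᵥ x) = x ⬝ᵥ x := Real.mul_self_sqrt hxx.le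
    set c := (Real.sqrt (x ⬝ᵥ x))⁻¹ with hc
    have hys : (c • x) ∈ s := by
      show (c • x) ⬝ᵥ (c • x) = 1
      rw [smul_dotProduct, dotProduct_smul, smul_eq_mul, smul_eq_mul, hc]
      field_simp
      rw [Real.sq_sqrt hxx.le]
    have := hmin hys
    have hval : (c • x) ⬝ᵥ P *ᵥ (c • x) = (c * c) * (x ⬝ᵥ P *ᵥ x) := by
      rw [smul_dotProduct, mulVec_smul, dotProduct_smul, smul_eq_mul, smul_eq_mul]
      ring
    have hcc : c * c = (x ⬝ᵥ x)⁻¹ := by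
      rw [hc, ← mul_inv, hsq]
    simp only [Set.mem_setOf_eq] at this
    rw [hval, hcc] at this
    rw [div_eq_inv_mul]
    linarith [this]
  exact lt_of_lt_of_le hm hlow

lemma frob_trace (N : Matrix (Fin d) (Fin d) ℝ) :
    (N * Nᵀ).trace = ∑ i, ∑ j, N i j ^ 2 := by
  simp [Matrix.trace, Matrix.mul_apply, Matrix.diag, sq]

lemma trace_mul_transpose_nonneg (N : Matrix (Fin d) (Fin d) ℝ) : 0 ≤ (N * Nᵀ).trace := by
  rw [frob_trace]
  exact Finset.sum_nonneg fun i _ => Finset.sum_nonneg fun j _ => sq_nonneg _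

lemma opNorm_sq_le_trace (N : Matrix (Fin d) (Fin d) ℝ) :
    ‖N‖ ^ 2 ≤ (N * Nᵀ).trace := by
  have hT := trace_mul_transpose_nonneg N
  have hb : ‖N‖ ≤ Real.sqrt ((N * Nᵀ).trace) := by
    rw [Matrix.l2_opNorm_def]
    refine ContinuousLinearMap.opNorm_le_bound _ (Real.sqrt_nonneg _) fun x => ?_
    have hx : ((LinearEquiv.trans Matrix.toEuclideanLin
        LinearMap.toContinuousLinearMap) N) x = (WithLp.equiv 2 (Fin d → ℝ)).symm
          (N *ᵥ (WithLp.equiv 2 (Fin d → ℝ)) x) := rfl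
    rw [hx, EuclideanSpace.norm_eq, EuclideanSpace.norm_eq]
    set y : Fin d → ℝ := (WithLp.equiv 2 (Fin d → ℝ)) x with hy
    have h1 : ∀ i, ((WithLp.equiv 2 (Fin d → ℝ)).symm (N *ᵥ y)) i = (N *ᵥ y) i := fun i => rfl
    have key : ∑ i, (N *ᵥ y) i ^ 2 ≤ ((N * Nᵀ).trace) * ∑ j, y j ^ 2 := by
      rw [frob_trace, Finset.sum_mul]
      refine Finset.sum_le_sum fun i _ => ?_
      have := Finset.sum_mul_sq_le_sq_mul_sq Finset.univ (fun j => N i j) y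
      simpa [Matrix.mulVec, dotProduct] using this
    calc Real.sqrt (∑ i, ‖((WithLp.equiv 2 (Fin d → ℝ)).symm (N *ᵥ y)) i‖ ^ 2)
        = Real.sqrt (∑ i, (N *ᵥ y) i ^ 2) := by
          congr 1; refine Finset.sum_congr rfl fun i _ => ?_; rw [h1, Real.norm_eq_abs, sq_abs]
      _ ≤ Real.sqrt (((N * Nᵀ).trace) * ∑ j, y j ^ 2) := Real.sqrt_le_sqrt key
      _ = Real.sqrt ((N * Nᵀ).trace) * Real.sqrt (∑ j, y j ^ 2) := Real.sqrt_mul hT _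
      _ = Real.sqrt ((N * Nᵀ).trace) * Real.sqrt (∑ j, ‖x j‖ ^ 2) := by
          congr 2; refine Finset.sum_congr rfl fun j _ => ?_; rw [Real.norm_eq_abs, sq_abs]; rfl
  calc ‖N‖ ^ 2 ≤ Real.sqrt ((N * Nᵀ).trace) ^ 2 := by
        have := norm_nonneg N; nlinarith
    _ = (N * Nᵀ).trace := Real.sq_sqrt hT

lemma norm_transpose (N : Matrix (Fin d) (Fin d) ℝ) : ‖Nᵀ‖ = ‖N‖ := by
  rw [← herm_eq_transpose]; exact Matrix.l2_opNorm_conjTranspose N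

lemma norm_one_mat [Nonempty (Fin d)] : ‖(1 : Matrix (Fin d) (Fin d) ℝ)‖ = 1 := by
  have h := Matrix.l2_opNorm_conjTranspose_mul_self (1 : Matrix (Fin d) (Fin d) ℝ)
  rw [conjTranspose_one, mul_one] at h
  have hne : (1 : Matrix (Fin d) (Fin d) ℝ) ≠ 0 := by
    intro hh
    obtain ⟨i⟩ := ‹Nonempty (Fin d)›
    have := congrFun (congrFun hh i) i
    simp at this
  have hpos : 0 < ‖(1 : Matrix (Fin d) (Fin d) ℝ)‖ := norm_pos_iff.mpr hne
  nlinarith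

lemma norm_pow_le [Nonempty (Fin d)] (M : Matrix (Fin d) (Fin d) ℝ) (t : ℕ) :
    ‖M ^ t‖ ≤ ‖M‖ ^ t := by
  induction t with
  | zero => simp [norm_one_mat]
  | succ n ih =>
    rw [pow_succ, pow_succ]
    calc ‖M ^ n * M‖ ≤ ‖M ^ n‖ * ‖M‖ := Matrix.l2_opNorm_mul _ _
      _ ≤ ‖M‖ ^ n * ‖M‖ := mul_le_mul_of_nonneg_right ih (norm_nonneg M)

end S11


open S11

/-- `‖T^y_K‖ ≤ C_y(K) / (λ¹_y λ_min(Q))` where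
`λ¹_y = λ_min(Σ_{y₀} + (γ/(1-γ))Σ¹) > 0`,
`C_y(K) = Tr((Q+KᵀRK) Σ^y_K)` and `Σ^y_K = T^y_K(Σ_{y₀} + (γ/(1-γ))Σ¹)`. -/
theorem stmt_11 {d l : ℕ} (γ : ℝ) (hγ : γ ∈ Set.Ioo (0:ℝ) 1)
    (A : Matrix (Fin d) (Fin d) ℝ) (B : Matrix (Fin d) (Fin l) ℝ)
    (K : Matrix (Fin l) (Fin d) ℝ)
    (hK : γ * ‖A - B * K‖ ^ 2 < 1)
    (Q : Matrix (Fin d) (Fin d) ℝ) (R : Matrix (Fin l) (Fin l) ℝ)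
    (hQ : Q.PosDef) (hR : R.PosSemidef)
    (Sy0 S1 : Matrix (Fin d) (Fin d) ℝ)
    (hSy0 : Sy0.PosSemidef) (hS1 : S1.PosSemidef)
    (TK : Matrix (Fin d) (Fin d) ℝ → Matrix (Fin d) (Fin d) ℝ)
    (hTK : ∀ X, TK X =
      ∑' t : ℕ, γ ^ t • ((A - B * K) ^ t * X * ((A - B * K)ᵀ) ^ t))
    (hlam : 0 < lamMin (Sy0 + (γ / (1 - γ)) • S1)) :
    opN TK ≤ ((Q + Kᵀ * R * K) * TK (Sy0 + (γ / (1 - γ)) • S1)).trace /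
      (lamMin (Sy0 + (γ / (1 - γ)) • S1) * lamMin Q) := by
  obtain ⟨hγ0, hγ1⟩ := hγ
  set M : Matrix (Fin d) (Fin d) ℝ := A - B * K with hM
  set Sig : Matrix (Fin d) (Fin d) ℝ := Sy0 + (γ / (1 - γ)) • S1 with hSigdef
  -- nonemptiness
  have hne : Nonempty {x : Fin d → ℝ // x ≠ 0} := by
    by_contra h
    rw [not_nonempty_iff] at h
    haveI := h
    unfold lamMin at hlam
    rw [Real.iInf_of_isEmpty] at hlam
    exact lt_irrefl 0 hlam
  have hdne : Nonempty (Fin d) := by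
    obtain ⟨⟨x, hx⟩⟩ := hne
    by_contra h
    rw [not_nonempty_iff] at h
    exact hx (funext fun i => (h.false i).elim)
  -- Sig PSD
  have hc : 0 ≤ γ / (1 - γ) := div_nonneg hγ0.le (by linarith)
  have hSig : Sig.PosSemidef := by
    refine hSy0.add (PosSemidef.of_dotProduct_mulVec_nonneg ?_ fun x => ?_)
    · show ((γ / (1 - γ)) • S1)ᴴ = (γ / (1 - γ)) • S1
      rw [herm_eq_transpose, transpose_smul, trans_eq_of_herm hS1.1]
    · have := psd_quad hS1 x
      rw [smul_mulVec, dotProduct_smul]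
      simpa using mul_nonneg hc (by simpa using this)
  set lam1 : ℝ := lamMin Sig with hlam1def
  set lamQ : ℝ := lamMin Q with hlamQdef
  have hlam1 : 0 < lam1 := hlam
  have hlamQ : 0 < lamQ := lamMin_pos hQ hne
  -- geometric bounds
  set r : ℝ := γ * ‖M‖ ^ 2 with hrdef
  have hr0 : 0 ≤ r := mul_nonneg hγ0.le (sq_nonneg _)
  set g : ℕ → ℝ := fun t => γ ^ t * ‖M ^ t‖ ^ 2 with hgdef
  have hg0 : ∀ t, 0 ≤ g t := fun t => mul_nonneg (pow_nonneg hγ0.le t) (sq_nonneg _)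
  have hgle : ∀ t, g t ≤ r ^ t := by
    intro t
    have h1 : ‖M ^ t‖ ^ 2 ≤ (‖M‖ ^ t) ^ 2 := by
      have := S11.norm_pow_le M t
      have h2 := norm_nonneg (M ^ t)
      nlinarith
    calc γ ^ t * ‖M ^ t‖ ^ 2 ≤ γ ^ t * (‖M‖ ^ t) ^ 2 :=
          mul_le_mul_of_nonneg_left h1 (pow_nonneg hγ0.le t)
      _ = r ^ t := by rw [hrdef, mul_pow, ← pow_mul, ← pow_mul, Nat.mul_comm]
  have hg_sum : Summable g :=
    Summable.of_nonneg_of_le hg0 hgle (summable_geometric_of_lt_one hr0 hK)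
  -- the summand family
  set f : Matrix (Fin d) (Fin d) ℝ → ℕ → Matrix (Fin d) (Fin d) ℝ :=
    fun W t => γ ^ t • (M ^ t * W * (Mᵀ) ^ t) with hfdef
  have hfb : ∀ W t, ‖f W t‖ ≤ ‖W‖ * g t := by
    intro W t
    have h1 : ‖f W t‖ = γ ^ t * ‖M ^ t * W * (Mᵀ) ^ t‖ := by
      rw [hfdef]
      simp only [norm_smul, Real.norm_eq_abs, abs_of_pos (pow_pos hγ0 t)]
    have h2 : ‖M ^ t * W * (Mᵀ) ^ t‖ ≤ ‖M ^ t‖ * ‖W‖ * ‖M ^ t‖ := by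
      have ha := Matrix.l2_opNorm_mul (M ^ t * W) ((Mᵀ) ^ t)
      have hb := Matrix.l2_opNorm_mul (M ^ t) W
      have hc2 : ‖(Mᵀ) ^ t‖ = ‖M ^ t‖ := by rw [← transpose_pow, S11.norm_transpose]
      rw [hc2] at ha
      calc ‖M ^ t * W * (Mᵀ) ^ t‖ ≤ ‖M ^ t * W‖ * ‖M ^ t‖ := ha
        _ ≤ ‖M ^ t‖ * ‖W‖ * ‖M ^ t‖ :=
            mul_le_mul_of_nonneg_right hb (norm_nonneg _)
    rw [h1, hgdef]
    calc γ ^ t * ‖M ^ t * W * (Mᵀ) ^ t‖ ≤ γ ^ t * (‖M ^ t‖ * ‖W‖ * ‖M ^ t‖) :=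
          mul_le_mul_of_nonneg_left h2 (pow_nonneg hγ0.le t)
      _ = ‖W‖ * (γ ^ t * ‖M ^ t‖ ^ 2) := by ring
  have hf_sum : ∀ W, Summable (f W) := fun W =>
    Summable.of_norm_bounded (hg_sum.mul_left ‖W‖) (hfb W)
  have hHS : ∀ W, HasSum (f W) (TK W) := by
    intro W
    rw [hTK W]
    exact (hf_sum W).hasSum
  -- trace of TK Sig
  set tr : Matrix (Fin d) (Fin d) ℝ →L[ℝ] ℝ :=
    LinearMap.toContinuousLinearMap (traceLinearMap (Fin d) ℝ ℝ) with htrdef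
  have htr_apply : ∀ Z : Matrix (Fin d) (Fin d) ℝ, tr Z = Z.trace := fun Z => rfl
  have hTr : HasSum (fun t => γ ^ t * (M ^ t * Sig * (Mᵀ) ^ t).trace) ((TK Sig).trace) := by
    have h := (hHS Sig).mapL tr
    have h2 : (fun t => tr (f Sig t)) = fun t => γ ^ t * (M ^ t * Sig * (Mᵀ) ^ t).trace := by
      funext t
      rw [htr_apply, hfdef]
      simp [trace_smul]
    rwa [h2, htr_apply] at h
  set S : ℝ := ∑' t, g t with hSdef
  have hS0 : 0 ≤ S := tsum_nonneg hg0
  -- Step B : lam1 * S ≤ trace (TK Sig)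
  have hP1 : (Sig - lam1 • (1 : Matrix (Fin d) (Fin d) ℝ)).PosSemidef := by
    refine PosSemidef.of_dotProduct_mulVec_nonneg ?_ ?_
    · show (Sig - lam1 • (1 : Matrix (Fin d) (Fin d) ℝ))ᴴ = _
      rw [herm_eq_transpose, transpose_sub, transpose_smul, transpose_one,
        trans_eq_of_herm hSig.1]
    · intro x
      have := lamMin_mul_le hSig x
      simp only [star_trivial, sub_mulVec, dotProduct_sub, smul_mulVec, one_mulVec,
        dotProduct_smul, smul_eq_mul]
      linarith
  have hterm : ∀ t, lam1 * g t ≤ γ ^ t * (M ^ t * Sig * (Mᵀ) ^ t).trace := by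
    intro t
    set N : Matrix (Fin d) (Fin d) ℝ := M ^ t with hNdef
    have hNt : (Mᵀ) ^ t = Nᵀ := (transpose_pow M t).symm
    have h1 : lam1 * ‖N‖ ^ 2 ≤ lam1 * (N * Nᵀ).trace :=
      mul_le_mul_of_nonneg_left (opNorm_sq_le_trace N) hlam1.le
    have h2 : lam1 * (N * Nᵀ).trace ≤ (N * Sig * Nᵀ).trace := by
      have hpsd := hP1.mul_mul_conjTranspose_same N
      rw [herm_eq_transpose] at hpsd
      have h0 := trace_psd_nonneg hpsd
      have hexp : N * (Sig - lam1 • 1) * Nᵀ = N * Sig * Nᵀ - lam1 • (N * Nᵀ) := by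
        rw [mul_sub, sub_mul]
        congr 1
        rw [mul_smul_comm, mul_one, smul_mul_assoc]
      rw [hexp, trace_sub, trace_smul, smul_eq_mul] at h0
      linarith
    rw [hNt]
    calc lam1 * g t = γ ^ t * (lam1 * ‖N‖ ^ 2) := by rw [hgdef]; ring
      _ ≤ γ ^ t * (N * Sig * Nᵀ).trace := by
          refine mul_le_mul_of_nonneg_left ?_ (pow_nonneg hγ0.le t)
          linarith
  have hB : lam1 * S ≤ (TK Sig).trace := by
    calc lam1 * S = ∑' t, lam1 * g t := by rw [hSdef, tsum_mul_left]
      _ ≤ ∑' t, γ ^ t * (M ^ t * Sig * (Mᵀ) ^ t).trace :=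
          Summable.tsum_le_tsum hterm (hg_sum.mul_left lam1) hTr.summable
      _ = (TK Sig).trace := hTr.tsum_eq
  -- Step C : Y := TK Sig is PSD and lamQ * trace Y ≤ trace ((Q + KᵀRK) Y)
  set Y : Matrix (Fin d) (Fin d) ℝ := TK Sig with hYdef
  have hterm_psd : ∀ t : ℕ, (M ^ t * Sig * (Mᵀ) ^ t).PosSemidef := by
    intro t
    have := hSig.mul_mul_conjTranspose_same (M ^ t)
    rwa [herm_eq_transpose, transpose_pow] at this
  have hY : Y.PosSemidef := by
    refine PosSemidef.of_dotProduct_mulVec_nonneg ?_ ?_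
    · -- hermitian
      set tp : Matrix (Fin d) (Fin d) ℝ →L[ℝ] Matrix (Fin d) (Fin d) ℝ :=
        LinearMap.toContinuousLinearMap
          { toFun := fun W => Wᵀ
            map_add' := fun X Z => transpose_add X Z
            map_smul' := fun c X => transpose_smul c X } with htpdef
      have h1 := (hHS Sig).mapL tp
      have h2 : (fun t => tp (f Sig t)) = f Sig := by
        funext t
        show (f Sig t)ᵀ = f Sig t
        rw [hfdef]
        dsimp only
        rw [transpose_smul, trans_eq_of_herm (hterm_psd t).1]
      rw [h2] at h1
      have h3 : Yᵀ = Y := h1.unique (hHS Sig)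
      show Yᴴ = Y
      rw [herm_eq_transpose]
      exact h3
    · intro x
      set q : Matrix (Fin d) (Fin d) ℝ →L[ℝ] ℝ :=
        LinearMap.toContinuousLinearMap
          { toFun := fun W => x ⬝ᵥ W *ᵥ x
            map_add' := fun X Z => by simp [add_mulVec, dotProduct_add]
            map_smul' := fun c X => by simp [smul_mulVec, dotProduct_smul] } with hqdef
      have h1 := (hHS Sig).mapL q
      have hq_apply : ∀ W, q W = x ⬝ᵥ W *ᵥ x := fun W => rfl
      have h2 : 0 ≤ x ⬝ᵥ Y *ᵥ x := by
        rw [← hq_apply, ← h1.tsum_eq]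
        refine tsum_nonneg fun t => ?_
        rw [hq_apply, hfdef]
        simp only [smul_mulVec, dotProduct_smul, smul_eq_mul]
        exact mul_nonneg (pow_nonneg hγ0.le t) (psd_quad (hterm_psd t) x)
      simpa using h2
  have hC : lamQ * Y.trace ≤ ((Q + Kᵀ * R * K) * Y).trace := by
    have hCpsd : (Kᵀ * R * K).PosSemidef := by
      have := hR.conjTranspose_mul_mul_same K
      rwa [herm_eq_transpose] at this
    have hQ1 : (Q - lamQ • (1 : Matrix (Fin d) (Fin d) ℝ)).PosSemidef := by
      refine PosSemidef.of_dotProduct_mulVec_nonneg ?_ ?_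
      · show (Q - lamQ • (1 : Matrix (Fin d) (Fin d) ℝ))ᴴ = _
        rw [herm_eq_transpose, transpose_sub, transpose_smul, transpose_one,
          trans_eq_of_herm hQ.posSemidef.1]
      · intro x
        have := lamMin_mul_le hQ.posSemidef x
        simp only [star_trivial, sub_mulVec, dotProduct_sub, smul_mulVec, one_mulVec,
          dotProduct_smul, smul_eq_mul]
        linarith
    have h3 := trace_mul_psd_nonneg hQ1 hY
    have hexp : (Q - lamQ • (1 : Matrix (Fin d) (Fin d) ℝ)) * Y = Q * Y - lamQ • Y := by
      rw [sub_mul, smul_mul_assoc, one_mul]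
    rw [hexp, trace_sub, trace_smul, smul_eq_mul] at h3
    have h4 := trace_mul_psd_nonneg hCpsd hY
    have h5 : ((Q + Kᵀ * R * K) * Y).trace = (Q * Y).trace + (Kᵀ * R * K * Y).trace := by
      rw [add_mul, trace_add]
    rw [h5]
    linarith
  -- Step A : for ‖X‖ ≤ 1, ‖TK X‖ ≤ S
  have hA : ∀ X : Matrix (Fin d) (Fin d) ℝ, ‖X‖ ≤ 1 → ‖TK X‖ ≤ S := by
    intro X hX
    have hnorms : Summable (fun t => ‖f X t‖) :=
      Summable.of_nonneg_of_le (fun t => norm_nonneg _) (hfb X) (hg_sum.mul_left ‖X‖)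
    calc ‖TK X‖ = ‖∑' t, f X t‖ := by rw [(hHS X).tsum_eq]
      _ ≤ ∑' t, ‖f X t‖ := norm_tsum_le_tsum_norm hnorms
      _ ≤ ∑' t, g t := by
          refine Summable.tsum_le_tsum (fun t => ?_) hnorms hg_sum
          calc ‖f X t‖ ≤ ‖X‖ * g t := hfb X t
            _ ≤ 1 * g t := mul_le_mul_of_nonneg_right hX (hg0 t)
            _ = g t := one_mul _
      _ = S := rfl
  -- conclude
  have hSF : S ≤ ((Q + Kᵀ * R * K) * Y).trace / (lam1 * lamQ) := by
    rw [le_div_iff₀ (mul_pos hlam1 hlamQ)]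
    nlinarith [hB, hC, hlamQ.le, hlam1.le, hS0]
  rw [opN]
  have hinst : Nonempty {X : Matrix (Fin d) (Fin d) ℝ // ‖X‖ ≤ 1} :=
    ⟨⟨0, by simp⟩⟩
  refine ciSup_le fun X => ?_
  calc ‖TK X.1‖ ≤ S := hA X.1 X.2
    _ ≤ ((Q + Kᵀ * R * K) * Y).trace / (lam1 * lamQ) := hSF
end

section
/- Truncation error bound: if θ is admissible and T ≥ 2, then ‖Σ^y_K - Σ^{y,T}_K‖ ≤ (T+1)γ_θ^T C_{0,var}/(1-γ_θ)², where Σ^{y,T}_K = E Σ_{t=0}^{T-1} γᵗ y_t y_tᵀ, γ_θ = max{γ, γ‖A-BK‖²} < 1, and C_{0,var} bounds ‖Σ_{y_0}‖ and ‖Σ¹‖. Consequently, if T ≥ ((1/log(1/γ_θ))(log((1/ε)·C_{0,var}/(1-γ_θ)²)+1))², then ‖Σ^y_K - Σ^{y,T}_K‖ ≤ ε. -/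
open scoped Matrix.Norms.L2Operator
open Matrix

lemma log_add_one_le_sqrt {x : ℝ} (hx : 0 ≤ x) : Real.log (1 + x) ≤ Real.sqrt x := by
  set z := (1 + x) ^ ((8:ℝ)⁻¹) with hzdef
  have h1x : (0:ℝ) < 1 + x := by linarith
  have hz1 : 1 ≤ z := Real.one_le_rpow (by linarith) (by norm_num)
  have hz8 : z ^ (8:ℕ) = 1 + x := by
    rw [hzdef, ← Real.rpow_natCast, ← Real.rpow_mul h1x.le]
    norm_num
  have hlog : Real.log (1 + x) = 8 * Real.log z := by
    rw [← hz8, Real.log_pow]; push_cast; ring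
  have hlz : Real.log z ≤ z - 1 := Real.log_le_sub_one_of_pos (by linarith)
  have key : (8 * (z - 1)) ^ 2 ≤ z ^ (8:ℕ) - 1 := by
    have hw : 0 ≤ z - 1 := by linarith
    set w := z - 1 with hwdef
    have hz : z = 1 + w := by rw [hwdef]; ring
    rw [hz]
    nlinarith [mul_nonneg hw (sq_nonneg (28*w - 9)), pow_nonneg hw 4, pow_nonneg hw 5,
      pow_nonneg hw 6, pow_nonneg hw 7, pow_nonneg hw 8]
  have key' : (8 * (z - 1)) ^ 2 ≤ x := by rw [hz8] at key; linarith
  have h8z : 0 ≤ 8 * (z - 1) := by linarith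
  have hfin := (Real.le_sqrt h8z hx).mpr key'
  calc Real.log (1 + x) = 8 * Real.log z := hlog
    _ ≤ 8 * (z - 1) := by linarith
    _ ≤ Real.sqrt x := hfin

lemma conj_pow_norm {d : ℕ} (M S : Matrix (Fin d) (Fin d) ℝ) (t : ℕ) :
    ‖M ^ t * S * (Mᵀ) ^ t‖ ≤ (‖M‖ ^ 2) ^ t * ‖S‖ := by
  induction t with
  | zero => simp
  | succ t ih =>
    have heq : M ^ (t+1) * S * (Mᵀ) ^ (t+1) = M * (M ^ t * S * (Mᵀ) ^ t) * Mᵀ := by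
      rw [pow_succ' M, pow_succ Mᵀ]; noncomm_ring
    have hTn : ‖Mᵀ‖ = ‖M‖ := by
      rw [← conjTranspose_eq_transpose_of_trivial, l2_opNorm_conjTranspose]
    calc ‖M ^ (t+1) * S * (Mᵀ) ^ (t+1)‖ = ‖M * (M ^ t * S * (Mᵀ) ^ t) * Mᵀ‖ := by rw [heq]
      _ ≤ ‖M * (M ^ t * S * (Mᵀ) ^ t)‖ * ‖Mᵀ‖ := norm_mul_le _ _
      _ ≤ ‖M‖ * ‖M ^ t * S * (Mᵀ) ^ t‖ * ‖M‖ := by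
          rw [hTn]
          exact mul_le_mul_of_nonneg_right (norm_mul_le _ _) (norm_nonneg _)
      _ = ‖M‖ ^ 2 * ‖M ^ t * S * (Mᵀ) ^ t‖ := by ring
      _ ≤ ‖M‖ ^ 2 * ((‖M‖ ^ 2) ^ t * ‖S‖) := mul_le_mul_of_nonneg_left ih (sq_nonneg _)
      _ = (‖M‖ ^ 2) ^ (t+1) * ‖S‖ := by rw [pow_succ']; ring

lemma tail_tsum {ρ : ℝ} (h0 : 0 ≤ ρ) (h1 : ρ < 1) (T : ℕ) :
    ∑' i : ℕ, (((i:ℝ) + T + 1) * ρ ^ (i + T)) = ρ ^ T * (1 + T * (1 - ρ)) / (1 - ρ) ^ 2 := by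
  have hρn : ‖ρ‖ < 1 := by rw [Real.norm_eq_abs, abs_lt]; constructor <;> linarith
  have hs1 : Summable (fun i : ℕ => (i:ℝ) * ρ ^ i) := by
    simpa using summable_pow_mul_geometric_of_norm_lt_one 1 hρn
  have hs2 : Summable (fun i : ℕ => ρ ^ i) := summable_geometric_of_lt_one h0 h1
  have h1ρ : (1:ℝ) - ρ ≠ 0 := by linarith
  calc ∑' i : ℕ, (((i:ℝ) + T + 1) * ρ ^ (i + T))
      = ∑' i : ℕ, (ρ ^ T * ((i:ℝ) * ρ ^ i) + (ρ ^ T * ((T:ℝ) + 1)) * ρ ^ i) := by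
        apply tsum_congr; intro i; rw [pow_add]; ring
    _ = ρ ^ T * (∑' i : ℕ, (i:ℝ) * ρ ^ i) + (ρ ^ T * ((T:ℝ) + 1)) * ∑' i : ℕ, ρ ^ i := by
        rw [Summable.tsum_add (hs1.mul_left _) (hs2.mul_left _), tsum_mul_left, tsum_mul_left]
    _ = ρ ^ T * (ρ / (1 - ρ) ^ 2) + (ρ ^ T * ((T:ℝ) + 1)) * (1 - ρ)⁻¹ := by
        rw [tsum_coe_mul_geometric_of_norm_lt_one hρn, tsum_geometric_of_lt_one h0 h1]
    _ = ρ ^ T * (1 + T * (1 - ρ)) / (1 - ρ) ^ 2 := by field_simp; ring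

set_option maxHeartbeats 1000000 in
/-- truncation error bound. With `M = A - BK`,
`Σ^y_K = ∑_{t≥0} γ^t Cov(y_t)` and `Σ^{y,T}_K = ∑_{t<T} γ^t Cov(y_t)` where
`Cov(y_t) = M^t Σ_{y₀} (Mᵀ)^t + ∑_{s<t} M^s Σ¹ (Mᵀ)^s`, for `T ≥ 2`:
`‖Σ^y_K - Σ^{y,T}_K‖ ≤ (T+1) γ_θ^T C_{0,var}/(1-γ_θ)²` with
`γ_θ = max{γ, γ‖A-BK‖²} < 1` and `C_{0,var} ≥ max{‖Σ_{y₀}‖, ‖Σ¹‖}`;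
consequently, if `T ≥ ((1/log(1/γ_θ))(log((1/ε) C_{0,var}/(1-γ_θ)²)+1))²`
then `‖Σ^y_K - Σ^{y,T}_K‖ ≤ ε`. -/
theorem stmt_13 {d l : ℕ} (γ : ℝ) (hγ : γ ∈ Set.Ioo (0:ℝ) 1)
    (A : Matrix (Fin d) (Fin d) ℝ) (B : Matrix (Fin d) (Fin l) ℝ)
    (K : Matrix (Fin l) (Fin d) ℝ)
    (hK : γ * ‖A - B * K‖ ^ 2 < 1)
    (Sy0 S1 : Matrix (Fin d) (Fin d) ℝ)
    (hSy0 : Sy0.PosSemidef) (hS1 : S1.PosSemidef)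
    (C0var : ℝ) (hC0 : ‖Sy0‖ ≤ C0var ∧ ‖S1‖ ≤ C0var)
    (T : ℕ) (hT : 2 ≤ T)
    (ε : ℝ) (hε : 0 < ε) :
    ‖(∑' t : ℕ, γ ^ t •
          ((A - B * K) ^ t * Sy0 * ((A - B * K)ᵀ) ^ t
            + ∑ s ∈ Finset.range t, (A - B * K) ^ s * S1 * ((A - B * K)ᵀ) ^ s))
        - ∑ t ∈ Finset.range T, γ ^ t •
          ((A - B * K) ^ t * Sy0 * ((A - B * K)ᵀ) ^ t
            + ∑ s ∈ Finset.range t, (A - B * K) ^ s * S1 * ((A - B * K)ᵀ) ^ s)‖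
      ≤ ((T : ℝ) + 1) * max γ (γ * ‖A - B * K‖ ^ 2) ^ T * C0var /
          (1 - max γ (γ * ‖A - B * K‖ ^ 2)) ^ 2
    ∧
    (((1 / Real.log (1 / max γ (γ * ‖A - B * K‖ ^ 2))) *
        (Real.log ((1 / ε) * (C0var / (1 - max γ (γ * ‖A - B * K‖ ^ 2)) ^ 2)) + 1)) ^ 2
        ≤ (T : ℝ) →
      ‖(∑' t : ℕ, γ ^ t •
            ((A - B * K) ^ t * Sy0 * ((A - B * K)ᵀ) ^ t
              + ∑ s ∈ Finset.range t, (A - B * K) ^ s * S1 * ((A - B * K)ᵀ) ^ s))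
          - ∑ t ∈ Finset.range T, γ ^ t •
            ((A - B * K) ^ t * Sy0 * ((A - B * K)ᵀ) ^ t
              + ∑ s ∈ Finset.range t, (A - B * K) ^ s * S1 * ((A - B * K)ᵀ) ^ s)‖
        ≤ ε) := by
  obtain ⟨hγ0, hγ1⟩ := hγ
  set M : Matrix (Fin d) (Fin d) ℝ := A - B * K with hMdef
  set ρ : ℝ := max γ (γ * ‖M‖ ^ 2) with hρdef
  have hρ0 : 0 < ρ := lt_of_lt_of_le hγ0 (le_max_left _ _)
  have hρ1 : ρ < 1 := max_lt hγ1 hK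
  have h1ρ : 0 < 1 - ρ := by linarith
  have hC : 0 ≤ C0var := le_trans (norm_nonneg _) hC0.1
  set f : ℕ → Matrix (Fin d) (Fin d) ℝ := fun t => γ ^ t •
      (M ^ t * Sy0 * (Mᵀ) ^ t + ∑ s ∈ Finset.range t, M ^ s * S1 * (Mᵀ) ^ s) with hfdef
  set bnd : ℕ → ℝ := fun t => ((t:ℝ) + 1) * ρ ^ t * C0var with hbnddef
  -- pointwise bound
  have hfb : ∀ t : ℕ, ‖f t‖ ≤ bnd t := by
    intro t
    have hsm : ∀ s : ℕ, s ≤ t → γ ^ t * (‖M‖ ^ 2) ^ s ≤ ρ ^ t := by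
      intro s hs
      have h1 : γ ^ t * (‖M‖ ^ 2) ^ s = γ ^ (t - s) * (γ * ‖M‖ ^ 2) ^ s := by
        rw [mul_pow, ← mul_assoc, ← pow_add]
        congr 2
        omega
      rw [h1]
      have h2 : γ ^ (t-s) ≤ ρ ^ (t-s) := pow_le_pow_left₀ hγ0.le (le_max_left _ _) _
      have h3 : (γ * ‖M‖^2) ^ s ≤ ρ ^ s := pow_le_pow_left₀ (by positivity) (le_max_right _ _) _
      calc γ ^ (t-s) * (γ * ‖M‖^2) ^ s ≤ ρ ^ (t-s) * ρ ^ s :=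
            mul_le_mul h2 h3 (by positivity) (by positivity)
        _ = ρ ^ t := by rw [← pow_add]; congr 1; omega
    have hterm : ∀ (X : Matrix (Fin d) (Fin d) ℝ), ‖X‖ ≤ C0var → ∀ s : ℕ, s ≤ t →
        γ ^ t * ((‖M‖ ^ 2) ^ s * ‖X‖) ≤ ρ ^ t * C0var := by
      intro X hX s hs
      calc γ ^ t * ((‖M‖ ^ 2) ^ s * ‖X‖) = (γ ^ t * (‖M‖ ^ 2) ^ s) * ‖X‖ := by ring
        _ ≤ ρ ^ t * C0var := mul_le_mul (hsm s hs) hX (norm_nonneg _) (by positivity)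
    have h1 : ‖M ^ t * Sy0 * (Mᵀ) ^ t + ∑ s ∈ Finset.range t, M ^ s * S1 * (Mᵀ) ^ s‖
        ≤ (‖M‖^2)^t * ‖Sy0‖ + ∑ s ∈ Finset.range t, (‖M‖^2)^s * ‖S1‖ := by
      refine (norm_add_le _ _).trans (add_le_add (conj_pow_norm M Sy0 t) ?_)
      exact (norm_sum_le _ _).trans (Finset.sum_le_sum fun s _ => conj_pow_norm M S1 s)
    calc ‖f t‖ = γ ^ t * ‖M ^ t * Sy0 * (Mᵀ) ^ t + ∑ s ∈ Finset.range t, M ^ s * S1 * (Mᵀ) ^ s‖ := by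
          rw [hfdef]
          simp only [norm_smul, Real.norm_eq_abs, abs_of_pos (pow_pos hγ0 t)]
      _ ≤ γ ^ t * ((‖M‖^2)^t * ‖Sy0‖ + ∑ s ∈ Finset.range t, (‖M‖^2)^s * ‖S1‖) :=
          mul_le_mul_of_nonneg_left h1 (pow_pos hγ0 t).le
      _ = γ ^ t * ((‖M‖^2)^t * ‖Sy0‖) + ∑ s ∈ Finset.range t, γ ^ t * ((‖M‖^2)^s * ‖S1‖) := by
          rw [mul_add, Finset.mul_sum]
      _ ≤ ρ ^ t * C0var + ∑ s ∈ Finset.range t, ρ ^ t * C0var := by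
          refine add_le_add (hterm Sy0 hC0.1 t le_rfl) (Finset.sum_le_sum fun s hs => ?_)
          exact hterm S1 hC0.2 s (Finset.mem_range.1 hs).le
      _ = bnd t := by
          rw [Finset.sum_const, Finset.card_range, hbnddef]
          simp only [nsmul_eq_mul]
          ring
  -- summability
  have hρn : ‖ρ‖ < 1 := by rw [Real.norm_eq_abs, abs_of_pos hρ0]; exact hρ1
  have hb : Summable bnd := by
    have h1 : Summable (fun t : ℕ => (t:ℝ) * ρ^t) := by
      simpa using summable_pow_mul_geometric_of_norm_lt_one 1 hρn
    have h2 : Summable (fun t : ℕ => ρ^t) := summable_geometric_of_lt_one hρ0.le hρ1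
    have := (h1.add h2).mul_right C0var
    apply this.congr
    intro t
    simp only [hbnddef]
    ring
  have hsum : Summable f := Summable.of_norm_bounded hb hfb
  -- tail identity
  have hteq : (∑' t, f t) - ∑ t ∈ Finset.range T, f t = ∑' i : ℕ, f (i + T) := by
    rw [← Summable.sum_add_tsum_nat_add T hsum]
    abel
  have hshift : Summable (fun i : ℕ => bnd (i + T)) := (summable_nat_add_iff T).2 hb
  have hnorm_sum : Summable (fun i : ℕ => ‖f (i + T)‖) :=
    Summable.of_nonneg_of_le (fun i => norm_nonneg _) (fun i => hfb (i+T)) hshift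
  have hkey : ‖(∑' t, f t) - ∑ t ∈ Finset.range T, f t‖
      ≤ C0var * (ρ^T * (1 + T*(1-ρ)) / (1-ρ)^2) := by
    rw [hteq]
    calc ‖∑' i : ℕ, f (i+T)‖ ≤ ∑' i : ℕ, ‖f (i+T)‖ := norm_tsum_le_tsum_norm hnorm_sum
      _ ≤ ∑' i : ℕ, bnd (i+T) := Summable.tsum_le_tsum (fun i => hfb (i+T)) hnorm_sum hshift
      _ = ∑' i : ℕ, (((i:ℝ)+T+1) * ρ^(i+T)) * C0var := by
          apply tsum_congr; intro i; simp only [hbnddef]; push_cast; ring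
      _ = (∑' i : ℕ, ((i:ℝ)+T+1) * ρ^(i+T)) * C0var := tsum_mul_right
      _ = C0var * (ρ^T * (1+T*(1-ρ))/(1-ρ)^2) := by rw [tail_tsum hρ0.le hρ1 T]; ring
  constructor
  · refine hkey.trans ?_
    have h2 : C0var * (ρ^T * (1+(T:ℝ)*(1-ρ))) ≤ ((T:ℝ)+1) * ρ^T * C0var := by
      have hnn : (0:ℝ) ≤ ρ^T * C0var := by positivity
      have hnn2 : (0:ℝ) ≤ (T:ℝ) * ρ := by positivity
      nlinarith [mul_nonneg hnn hnn2]
    calc C0var * (ρ^T*(1+(T:ℝ)*(1-ρ))/(1-ρ)^2) = C0var * (ρ^T*(1+(T:ℝ)*(1-ρ)))/(1-ρ)^2 := by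
          ring
      _ ≤ ((T:ℝ)+1)*ρ^T*C0var/(1-ρ)^2 := by
          apply div_le_div_of_nonneg_right h2 (by positivity)
  · intro hTbig
    refine hkey.trans ?_
    rcases eq_or_lt_of_le hC with hC0' | hCpos
    · rw [← hC0', zero_mul]; linarith
    set L := Real.log (1/ρ) with hLdef
    have hlogρneg : Real.log ρ < 0 := Real.log_neg hρ0 hρ1
    have hLpos : 0 < L := by rw [hLdef, one_div, Real.log_inv]; linarith
    have hlogρ : Real.log ρ = -L := by rw [hLdef, one_div, Real.log_inv]; ring
    set S := Real.log ((1/ε) * (C0var / (1-ρ)^2)) with hSdef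
    have hargpos : 0 < (1/ε) * (C0var/(1-ρ)^2) := by positivity
    have hexpS : Real.exp S = (1/ε) * (C0var/(1-ρ)^2) := Real.exp_log hargpos
    have hgoal : ρ^T * (1 + (T:ℝ)*(1-ρ)) ≤ Real.exp (-S) →
        C0var * (ρ^T*(1+(T:ℝ)*(1-ρ))/(1-ρ)^2) ≤ ε := by
      intro h
      have hexpnegS : Real.exp (-S) = ε * (1-ρ)^2 / C0var := by
        rw [Real.exp_neg, hexpS]
        field_simp
      rw [hexpnegS] at h
      calc C0var * (ρ^T*(1+(T:ℝ)*(1-ρ))/(1-ρ)^2)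
          ≤ C0var * ((ε * (1-ρ)^2 / C0var)/(1-ρ)^2) := by
            apply mul_le_mul_of_nonneg_left _ hC
            apply div_le_div_of_nonneg_right h (by positivity)
        _ = ε := by field_simp
    apply hgoal
    rcases le_or_gt S 0 with hSneg | hSpos
    · have h1 : 1 + (T:ℝ)*(1-ρ) ≤ Real.exp ((T:ℝ)*(1-ρ)) := by
        linarith [Real.add_one_le_exp ((T:ℝ)*(1-ρ))]
      have h2 : ρ^T ≤ Real.exp (-((T:ℝ)*(1-ρ))) := by
        have hρe : ρ ≤ Real.exp (ρ - 1) := by linarith [Real.add_one_le_exp (ρ-1)]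
        calc ρ^T ≤ (Real.exp (ρ-1))^T := pow_le_pow_left₀ hρ0.le hρe T
          _ = Real.exp ((T:ℝ)*(ρ-1)) := (Real.exp_nat_mul _ T).symm
          _ = Real.exp (-((T:ℝ)*(1-ρ))) := by ring_nf
      have h3 : (0:ℝ) ≤ 1 + (T:ℝ)*(1-ρ) := by positivity
      calc ρ^T * (1+(T:ℝ)*(1-ρ))
          ≤ Real.exp (-((T:ℝ)*(1-ρ))) * Real.exp ((T:ℝ)*(1-ρ)) :=
            mul_le_mul h2 h1 h3 (Real.exp_nonneg _)
        _ = 1 := by rw [← Real.exp_add]; simp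
        _ ≤ Real.exp (-S) := Real.one_le_exp (by linarith)
    · have hTnn : (0:ℝ) ≤ (T:ℝ) := Nat.cast_nonneg T
      have hsq : Real.sqrt T * Real.sqrt T = (T:ℝ) := Real.mul_self_sqrt hTnn
      have hcast : (2:ℝ) ≤ (T:ℝ) := by exact_mod_cast hT
      have hsqrt1 : 1 ≤ Real.sqrt T := by
        rw [show (1:ℝ) = Real.sqrt 1 from (Real.sqrt_one).symm]
        exact Real.sqrt_le_sqrt (by linarith)
      have hST : S + 1 ≤ Real.sqrt T * L := by
        have h0' : 0 ≤ (1/L)*(S+1) := by positivity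
        have h1' := (Real.le_sqrt h0' hTnn).2 hTbig
        calc S + 1 = ((1/L)*(S+1)) * L := by field_simp
          _ ≤ Real.sqrt T * L := mul_le_mul_of_nonneg_right h1' hLpos.le
      have hTL : Real.sqrt T * (S+1) ≤ (T:ℝ) * L := by
        calc Real.sqrt T * (S+1) ≤ Real.sqrt T * (Real.sqrt T * L) :=
              mul_le_mul_of_nonneg_left hST (Real.sqrt_nonneg _)
          _ = (T:ℝ) * L := by rw [← mul_assoc, hsq]
      have hlogT : Real.log (1 + (T:ℝ)) ≤ Real.sqrt T := log_add_one_le_sqrt hTnn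
      have hSls : S ≤ (T:ℝ)*L - Real.log (1+(T:ℝ)) := by
        have hs1 : S ≤ Real.sqrt T * S := by
          nlinarith [mul_nonneg (by linarith : (0:ℝ) ≤ Real.sqrt (T:ℝ) - 1) hSpos.le]
        linarith
      have hρT : ρ^T = Real.exp (-((T:ℝ)*L)) := by
        have hρe : ρ = Real.exp (-L) := by rw [← hlogρ, Real.exp_log hρ0]
        rw [hρe, ← Real.exp_nat_mul]
        ring_nf
      have h1T : 1 + (T:ℝ)*(1-ρ) ≤ 1 + (T:ℝ) := by nlinarith [mul_nonneg hTnn hρ0.le]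
      calc ρ^T * (1+(T:ℝ)*(1-ρ)) ≤ ρ^T * (1+(T:ℝ)) := by
            apply mul_le_mul_of_nonneg_left h1T (by positivity)
        _ = Real.exp (-((T:ℝ)*L)) * Real.exp (Real.log (1+(T:ℝ))) := by
            rw [hρT, Real.exp_log (by positivity)]
        _ = Real.exp (Real.log (1+(T:ℝ)) - (T:ℝ)*L) := by rw [← Real.exp_add]; ring_nf
        _ ≤ Real.exp (-S) := Real.exp_le_exp.2 (by linarith)
end

section
/- Finite-population cost error: for any admissible θ = (K,L), |C^N(θ) - C(θ)| ≤ (d/N)(‖P^y_K‖ + ‖P^z_L‖)(‖Σ_{y_0}‖ + (γ/(1-γ))‖Σ¹‖). More precisely, C^N_y(θ) - C_y(K) = -(1/N)Tr(P^y_K(Σ_{y_0} + (γ/(1-γ))Σ¹)) and C^N_μ(θ) - C_z(L) = (1/N)Tr(P^z_L(Σ_{y_0} + (γ/(1-γ))Σ¹)). -/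
open scoped Matrix.Norms.L2Operator
open Matrix
open scoped RealInnerProductSpace

lemma abs_trace_mul_le {d : ℕ} (P X : Matrix (Fin d) (Fin d) ℝ) :
    |(P * X).trace| ≤ (d : ℝ) * (‖P‖ * ‖X‖) := by
  have key : ∀ i : Fin d, |(P * X) i i| ≤ ‖P‖ * ‖X‖ := by
    intro i
    set e : EuclideanSpace ℝ (Fin d) := EuclideanSpace.single i 1 with he
    set u : EuclideanSpace ℝ (Fin d) :=
      (EuclideanSpace.equiv (Fin d) ℝ).symm (Pᵀ *ᵥ e) with hu
    set v : EuclideanSpace ℝ (Fin d) :=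
      (EuclideanSpace.equiv (Fin d) ℝ).symm (X *ᵥ e) with hv
    have h1 : (P * X) i i = inner (𝕜 := ℝ) u v := by
      rw [PiLp.inner_apply]
      simp only [hu, hv, he, RCLike.inner_apply, starRingEnd_apply, star_trivial,
        Matrix.mul_apply]
      refine Finset.sum_congr rfl fun j _ => ?_
      have h2 : ∀ (M : Matrix (Fin d) (Fin d) ℝ),
          ((EuclideanSpace.equiv (Fin d) ℝ).symm (M *ᵥ e)) j = M j i := by
        intro M
        show (M *ᵥ (e : Fin d → ℝ)) j = M j i
        have : (e : Fin d → ℝ) = Pi.single i 1 := by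
          ext k; simp [he, EuclideanSpace.single_apply, Pi.single_apply]
        rw [this, Matrix.mulVec_single]
        simp
      rw [h2 P.transpose, h2 X]
      simp [Matrix.transpose_apply]
      ring
    rw [h1]
    have h3 : |inner (𝕜 := ℝ) u v| ≤ ‖u‖ * ‖v‖ := abs_real_inner_le_norm u v
    have h4 : ‖u‖ ≤ ‖P‖ := by
      have h := Pᵀ.l2_opNorm_mulVec e
      have hT : Pᵀ = Pᴴ := by ext; simp [Matrix.conjTranspose_apply]
      have hN : ‖Pᵀ‖ = ‖P‖ := by rw [hT]; exact Matrix.l2_opNorm_conjTranspose P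
      have hE : ‖e‖ = 1 := by rw [he]; simpa using EuclideanSpace.norm_single i (1:ℝ)
      rw [hN, hE, mul_one] at h
      exact h
    have h5 : ‖v‖ ≤ ‖X‖ := by
      have h := X.l2_opNorm_mulVec e
      have hE : ‖e‖ = 1 := by rw [he]; simpa using EuclideanSpace.norm_single i (1:ℝ)
      rw [hE, mul_one] at h
      exact h
    exact h3.trans (mul_le_mul h4 h5 (norm_nonneg _) (norm_nonneg _))
  calc |(P * X).trace| ≤ ∑ i, |(P * X) i i| := by
        simpa [Matrix.trace, Matrix.diag] using
          Finset.abs_sum_le_sum_abs (fun i => (P * X) i i) Finset.univ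
    _ ≤ ∑ _i : Fin d, (‖P‖ * ‖X‖) := Finset.sum_le_sum fun i _ => key i
    _ = (d : ℝ) * (‖P‖ * ‖X‖) := by simp [mul_comm]


/-- finite-population cost error. With mean-field costs
`C_y(K) = Tr(P^y_K Σ_{y₀}) + (γ/(1-γ))Tr(P^y_K Σ¹)`,
`C_z(L) = Tr(P^z_L Σ_{z₀}) + (γ/(1-γ))Tr(P^z_L Σ⁰)` and `N`-agent analogues using
the initial covariances `Σ^N_{y₀} = (1-1/N)Σ_{y₀}`, `Σ^N_{μ₀} = Σ_{z₀} + (1/N)Σ_{y₀}`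
and noise covariances `Σ^{1,N} = (1-1/N)Σ¹`, `Σ^{0,N} = Σ⁰ + (1/N)Σ¹`:
`C^N_y(θ) - C_y(K) = -(1/N)Tr(P^y_K(Σ_{y₀} + (γ/(1-γ))Σ¹))`,
`C^N_μ(θ) - C_z(L) = (1/N)Tr(P^z_L(Σ_{y₀} + (γ/(1-γ))Σ¹))`, and
`|C^N(θ) - C(θ)| ≤ (d/N)(‖P^y_K‖+‖P^z_L‖)(‖Σ_{y₀}‖+(γ/(1-γ))‖Σ¹‖)`. -/
theorem stmt_19 {d l : ℕ} (γ : ℝ) (hγ : γ ∈ Set.Ioo (0:ℝ) 1)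
    (A Abar : Matrix (Fin d) (Fin d) ℝ) (B Bbar : Matrix (Fin d) (Fin l) ℝ)
    (Q Qbar : Matrix (Fin d) (Fin d) ℝ) (R Rbar : Matrix (Fin l) (Fin l) ℝ)
    (K L : Matrix (Fin l) (Fin d) ℝ)
    (hK : γ * ‖A - B * K‖ ^ 2 < 1)
    (hL : γ * ‖A + Abar - (B + Bbar) * L‖ ^ 2 < 1)
    (Py Pz : Matrix (Fin d) (Fin d) ℝ)
    (hPy : Py = Q + Kᵀ * R * K + γ • ((A - B * K)ᵀ * Py * (A - B * K)))
    (hPz : Pz = Q + Qbar + Lᵀ * (R + Rbar) * L +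
      γ • ((A + Abar - (B + Bbar) * L)ᵀ * Pz * (A + Abar - (B + Bbar) * L)))
    (Sy0 Sz0 S1 S0 : Matrix (Fin d) (Fin d) ℝ)
    (hSy0 : Sy0.PosSemidef) (hSz0 : Sz0.PosSemidef)
    (hS1 : S1.PosSemidef) (hS0 : S0.PosSemidef)
    (N : ℕ) (hN : 0 < N)
    -- mean-field costs
    (CyMF CzMF CNy CNmu : ℝ)
    (hCy : CyMF = (Py * Sy0).trace + (γ / (1 - γ)) * (Py * S1).trace)
    (hCz : CzMF = (Pz * Sz0).trace + (γ / (1 - γ)) * (Pz * S0).trace)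
    -- N-agent costs
    (hCNy : CNy = (Py * ((1 - 1 / (N:ℝ)) • Sy0)).trace
      + (γ / (1 - γ)) * (Py * ((1 - 1 / (N:ℝ)) • S1)).trace)
    (hCNmu : CNmu = (Pz * (Sz0 + (1 / (N:ℝ)) • Sy0)).trace
      + (γ / (1 - γ)) * (Pz * (S0 + (1 / (N:ℝ)) • S1)).trace) :
    CNy - CyMF = -(1 / (N:ℝ)) * (Py * (Sy0 + (γ / (1 - γ)) • S1)).trace
    ∧ CNmu - CzMF = (1 / (N:ℝ)) * (Pz * (Sy0 + (γ / (1 - γ)) • S1)).trace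
    ∧ |(CNy + CNmu) - (CyMF + CzMF)|
        ≤ ((d : ℝ) / (N:ℝ)) * (‖Py‖ + ‖Pz‖) * (‖Sy0‖ + (γ / (1 - γ)) * ‖S1‖) := by
  set c : ℝ := γ / (1 - γ) with hc
  have hc0 : 0 ≤ c := div_nonneg hγ.1.le (by linarith [hγ.2])
  have e1 : CNy - CyMF = -(1 / (N:ℝ)) * (Py * (Sy0 + c • S1)).trace := by
    rw [hCNy, hCy]
    simp only [Matrix.mul_smul, Matrix.trace_smul, Matrix.mul_add, Matrix.trace_add,
      smul_eq_mul]
    ring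
  have e2 : CNmu - CzMF = (1 / (N:ℝ)) * (Pz * (Sy0 + c • S1)).trace := by
    rw [hCNmu, hCz]
    simp only [Matrix.mul_smul, Matrix.trace_smul, Matrix.mul_add, Matrix.trace_add,
      smul_eq_mul]
    ring
  refine ⟨e1, e2, ?_⟩
  have hdiff : (CNy + CNmu) - (CyMF + CzMF)
      = (1 / (N:ℝ)) * ((Pz * (Sy0 + c • S1)).trace - (Py * (Sy0 + c • S1)).trace) := by
    have : (CNy + CNmu) - (CyMF + CzMF) = (CNy - CyMF) + (CNmu - CzMF) := by ring
    rw [this, e1, e2]; ring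
  rw [hdiff]
  have hNpos : (0:ℝ) < (N:ℝ) := by exact_mod_cast hN
  have hS : ‖Sy0 + c • S1‖ ≤ ‖Sy0‖ + c * ‖S1‖ := by
    calc ‖Sy0 + c • S1‖ ≤ ‖Sy0‖ + ‖c • S1‖ := norm_add_le _ _
      _ = ‖Sy0‖ + c * ‖S1‖ := by rw [norm_smul, Real.norm_eq_abs, abs_of_nonneg hc0]
  have hy := abs_trace_mul_le Py (Sy0 + c • S1)
  have hz := abs_trace_mul_le Pz (Sy0 + c • S1)
  calc |(1 / (N:ℝ)) * ((Pz * (Sy0 + c • S1)).trace - (Py * (Sy0 + c • S1)).trace)|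
      = (1 / (N:ℝ)) * |(Pz * (Sy0 + c • S1)).trace - (Py * (Sy0 + c • S1)).trace| := by
        rw [abs_mul, abs_of_nonneg (by positivity)]
    _ ≤ (1 / (N:ℝ)) * (|(Pz * (Sy0 + c • S1)).trace| + |(Py * (Sy0 + c • S1)).trace|) := by
        gcongr; exact abs_sub _ _
    _ ≤ (1 / (N:ℝ)) * ((d:ℝ) * (‖Pz‖ * ‖Sy0 + c • S1‖) + (d:ℝ) * (‖Py‖ * ‖Sy0 + c • S1‖)) := by
        gcongr
    _ = ((d:ℝ) / (N:ℝ)) * (‖Py‖ + ‖Pz‖) * ‖Sy0 + c • S1‖ := by ring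
    _ ≤ ((d:ℝ) / (N:ℝ)) * (‖Py‖ + ‖Pz‖) * (‖Sy0‖ + c * ‖S1‖) := by
        have h1 : (0:ℝ) ≤ ((d:ℝ) / (N:ℝ)) * (‖Py‖ + ‖Pz‖) := by positivity
        exact mul_le_mul_of_nonneg_left hS h1
end
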